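/- arXiv:2509.02954 — 4 statements merged into one kernel-verified Lean document; each statement's English description precedes it below -/
import Mathlib

section
/- Suppose Λ satisfies the stated Hölder continuity, and let K ⊂ ℝ^{n+1} be compact and M > 0. Then there exist constants C > 0 and r₀ > 0, depending only on K, Λ, β and M, such that: (i) if X, Y ∈ K, r > 0 and |X − Y| ≤ M·r, then B_Λ(X,r) ⊆ B_Λ(Y, r + λ_min(X)^{-1}|X − Y| + C·r^{1+β}); (ii) if in addition |X − Y| ≤ λ_min(X)·r/2 and r ≤ r₀, then r − λ_min(X)^{-1}|X − Y| − C·r^{1+β} > 0 and B_Λ(Y, r − λ_min(X)^{-1}|X − Y| − C·r^{1+β}) ⊆ B_Λ(X,r). -/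
open MeasureTheory Metric Filter
open scoped RealInnerProductSpace ENNReal Topology

noncomputable section

abbrev Euc (n : ℕ) : Type := EuclideanSpace ℝ (Fin (n + 1))

/-- A continuous linear equivalence regarded as a continuous linear map. -/
def clm {n : ℕ} (A : Euc n ≃L[ℝ] Euc n) : Euc n →L[ℝ] Euc n := A

/-- Smallest eigenvalue of a symmetric operator, via the Rayleigh quotient. -/
def lamMin {n : ℕ} (A : Euc n →L[ℝ] Euc n) : ℝ :=
  sInf {t : ℝ | ∃ v : Euc n, ‖v‖ = 1 ∧ ⟪A v, v⟫ = t}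

/-- Largest eigenvalue of a symmetric operator, via the Rayleigh quotient. -/
def lamMax {n : ℕ} (A : Euc n →L[ℝ] Euc n) : ℝ :=
  sSup {t : ℝ | ∃ v : Euc n, ‖v‖ = 1 ∧ ⟪A v, v⟫ = t}

/-- Symmetric positive definite operator. -/
def IsSymPD {n : ℕ} (A : Euc n →L[ℝ] Euc n) : Prop :=
  (∀ v w : Euc n, ⟪A v, w⟫ = ⟪v, A w⟫) ∧ ∀ v : Euc n, v ≠ 0 → 0 < ⟪A v, v⟫

/-- Local Hölder continuity (with exponent β) of a matrix-valued map, in operator norm. -/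
def HolderOnCompacts {n : ℕ} (Λ : Euc n → (Euc n ≃L[ℝ] Euc n)) (β : ℝ) : Prop :=
  ∀ K : Set (Euc n), IsCompact K → ∃ H > 0, ∀ X ∈ K, ∀ Y ∈ K,
    ‖clm (Λ X) - clm (Λ Y)‖ ≤ H * ‖X - Y‖ ^ β

/-- The ellipse `B_Λ(X, r) = X + Λ(X)·B(0,r)`. -/
def BLam {n : ℕ} (Λ : Euc n → (Euc n ≃L[ℝ] Euc n)) (X : Euc n) (r : ℝ) :
    Set (Euc n) :=
  (fun W => X + (Λ X) W) '' Metric.ball (0 : Euc n) r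

/-- The non-concentric ellipse `B_Λ(X, X̄, r) = X + Λ(X̄)·B(0,r)`. -/
def BLam2 {n : ℕ} (Λ : Euc n → (Euc n ≃L[ℝ] Euc n)) (X Xb : Euc n) (r : ℝ) :
    Set (Euc n) :=
  (fun W => X + (Λ Xb) W) '' Metric.ball (0 : Euc n) r

/-- Lebesgue measure of the unit ball of `ℝ^n`. -/
def omegaN (n : ℕ) : ℝ :=
  (MeasureTheory.volume (Metric.ball (0 : EuclideanSpace ℝ (Fin n)) 1)).toReal

/-- Support of a measure. -/
def msupport {n : ℕ} (μ : Measure (Euc n)) : Set (Euc n) :=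
  {X | ∀ r : ℝ, 0 < r → 0 < μ (Metric.ball X r)}

/-- Density assumption of Theorem 1: Hölder convergence of anisotropic density ratios to 1. -/
def DensityHolder {n : ℕ} (Λ : Euc n → (Euc n ≃L[ℝ] Euc n)) (μ : Measure (Euc n)) (α : ℝ) :
    Prop :=
  ∀ K : Set (Euc n), IsCompact K → ∃ C > 0, ∀ X ∈ msupport μ ∩ K, ∀ r : ℝ, 0 < r → r ≤ 1 →
    |(μ (BLam Λ X r)).toReal / (omegaN n * r ^ n) - 1| ≤ C * r ^ α

/-- Doubling assumption of Theorem 2: Hölder asymptotically optimal doubling. -/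
def DoublingHolder {n : ℕ} (Λ : Euc n → (Euc n ≃L[ℝ] Euc n)) (μ : Measure (Euc n)) (α : ℝ) :
    Prop :=
  ∀ K : Set (Euc n), IsCompact K → ∃ C > 0, ∀ X ∈ msupport μ ∩ K,
    ∀ t ∈ Set.Icc (1 / 2 : ℝ) 1, ∀ r : ℝ, 0 < r → r ≤ 1 →
      |(μ (BLam Λ X (t * r))).toReal / (μ (BLam Λ X r)).toReal - t ^ n| ≤ C * r ^ α

/-- `μ` is Λ-asymptotically optimally doubling of dimension `m`. -/
def IsLamAOD {n : ℕ} (Λ : Euc n → (Euc n ≃L[ℝ] Euc n)) (μ : Measure (Euc n)) (m : ℕ) : Prop :=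
  ∀ K : Set (Euc n), IsCompact K → ∀ ε : ℝ, 0 < ε → ∃ r₀ > 0, ∀ r : ℝ, 0 < r → r ≤ r₀ →
    ∀ X ∈ msupport μ ∩ K, ∀ t ∈ Set.Icc (1 / 2 : ℝ) 1,
      |(μ (BLam Λ X (t * r))).toReal / (μ (BLam Λ X r)).toReal - t ^ m| ≤ ε

/-- Anisotropic blow-up map `T^Λ_{P,r}(Z) = Λ(P)⁻¹((Z − P)/r)`. -/
def TLam {n : ℕ} (Λ : Euc n → (Euc n ≃L[ℝ] Euc n)) (P : Euc n) (r : ℝ)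
    (Z : Euc n) : Euc n :=
  (Λ P).symm (r⁻¹ • (Z - P))

/-- The rescaled measure `μ_{P,r} = μ(B_Λ(P,r))⁻¹ · (T^Λ_{P,r})_* μ`. -/
def scaled {n : ℕ} (Λ : Euc n → (Euc n ≃L[ℝ] Euc n)) (μ : Measure (Euc n))
    (P : Euc n) (r : ℝ) : Measure (Euc n) :=
  (μ (BLam Λ P r))⁻¹ • Measure.map (TLam Λ P r) μ

/-- Weak convergence of a sequence of measures tested against `C_c` functions. -/
def WeakLim {n : ℕ} (μs : ℕ → Measure (Euc n)) (ν : Measure (Euc n)) : Prop :=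
  ∀ f : Euc n → ℝ, Continuous f → HasCompactSupport f →
    Tendsto (fun i => ∫ x, f x ∂(μs i)) atTop (nhds (∫ x, f x ∂ν))

/-- `ν` is a Λ-pseudo tangent measure of `μ` at `Q`. -/
def IsPseudoTangentAt {n : ℕ} (Λ : Euc n → (Euc n ≃L[ℝ] Euc n)) (μ : Measure (Euc n))
    (Q : Euc n) (ν : Measure (Euc n)) : Prop :=
  ν ≠ 0 ∧ ∃ Qs : ℕ → Euc n, ∃ ρs : ℕ → ℝ,
    (∀ i, Qs i ∈ msupport μ) ∧ (∀ i, 0 < ρs i) ∧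
    Tendsto Qs atTop (nhds Q) ∧ Tendsto ρs atTop (nhds (0 : ℝ)) ∧
    WeakLim (fun i => scaled Λ μ (Qs i) (ρs i)) ν

/-- `λ_min(K)`: infimum of smallest eigenvalues over the 1-neighborhood of `S`. -/
def lamMinOn {n : ℕ} (Λ : Euc n → (Euc n ≃L[ℝ] Euc n)) (S : Set (Euc n)) : ℝ :=
  sInf ((fun X => lamMin (clm (Λ X))) '' {X : Euc n | Metric.infDist X S ≤ 1})

/-- `λ_max(K)`: supremum of largest eigenvalues over the 1-neighborhood of `S`. -/
def lamMaxOn {n : ℕ} (Λ : Euc n → (Euc n ≃L[ℝ] Euc n)) (S : Set (Euc n)) : ℝ :=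
  sSup ((fun X => lamMax (clm (Λ X))) '' {X : Euc n | Metric.infDist X S ≤ 1})

/-- Local eccentricity `e_Λ(K) = λ_max(K)/λ_min(K)`. -/
def eLam {n : ℕ} (Λ : Euc n → (Euc n ≃L[ℝ] Euc n)) (S : Set (Euc n)) : ℝ :=
  lamMaxOn Λ S / lamMinOn Λ S

/-- Bilateral β-number `bβ_S(X,r)`: infimum over affine `m`-planes through `X` of the
normalized Hausdorff distance between `S` and the plane inside `B(X,r)`. -/
def bbeta {n : ℕ} (m : ℕ) (S : Set (Euc n)) (X : Euc n) (r : ℝ) : ℝ :=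
  sInf {d : ℝ | ∃ P : AffineSubspace ℝ (Euc n), X ∈ P ∧ Module.finrank ℝ P.direction = m ∧
    d = (1 / r) * Metric.hausdorffDist (S ∩ Metric.ball X r)
          ((P : Set (Euc n)) ∩ Metric.ball X r)}

/-- Unilateral (Jones-type) β-number `β_S(X,r)`. -/
def betaS {n : ℕ} (m : ℕ) (S : Set (Euc n)) (X : Euc n) (r : ℝ) : ℝ :=
  sInf {d : ℝ | ∃ P : AffineSubspace ℝ (Euc n), X ∈ P ∧ Module.finrank ℝ P.direction = m ∧
    d = sSup {t : ℝ | ∃ Y ∈ S ∩ Metric.ball X r, t = Metric.infDist Y (P : Set (Euc n)) / r}}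

/-- The singular set: points where the bilateral β-numbers do not tend to 0. -/
def singularSet {n : ℕ} (m : ℕ) (S : Set (Euc n)) : Set (Euc n) :=
  {X | X ∈ S ∧ 0 < Filter.limsup (fun r => bbeta m S X r) (nhdsWithin 0 (Set.Ioi (0 : ℝ)))}

end

section AuxNNE
variable {n : ℕ}

lemma rayleigh_nonempty (A : Euc n →L[ℝ] Euc n) :
    {t : ℝ | ∃ v : Euc n, ‖v‖ = 1 ∧ ⟪A v, v⟫ = t}.Nonempty := by
  refine ⟨⟪A (EuclideanSpace.single (0 : Fin (n+1)) (1:ℝ)),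
      EuclideanSpace.single (0 : Fin (n+1)) (1:ℝ)⟫,
    EuclideanSpace.single (0 : Fin (n+1)) (1:ℝ), ?_, rfl⟩
  rw [EuclideanSpace.norm_single]; norm_num

lemma rayleigh_bddBelow (A : Euc n →L[ℝ] Euc n) :
    BddBelow {t : ℝ | ∃ v : Euc n, ‖v‖ = 1 ∧ ⟪A v, v⟫ = t} := by
  refine ⟨-‖A‖, ?_⟩
  rintro t ⟨v, hv, rfl⟩
  have h1 : |⟪A v, v⟫| ≤ ‖A v‖ * ‖v‖ := abs_real_inner_le_norm _ _
  have h2 : ‖A v‖ ≤ ‖A‖ * ‖v‖ := A.le_opNorm v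
  rw [hv] at h1 h2
  have := (abs_le.mp (h1.trans (by simpa using h2))).1
  linarith

lemma lamMin_le (A : Euc n →L[ℝ] Euc n) (v : Euc n) (hv : ‖v‖ = 1) :
    lamMin A ≤ ⟪A v, v⟫ :=
  csInf_le (rayleigh_bddBelow A) ⟨v, hv, rfl⟩

lemma lamMin_mul_sq_le (A : Euc n →L[ℝ] Euc n) (v : Euc n) :
    lamMin A * ‖v‖ ^ 2 ≤ ⟪A v, v⟫ := by
  rcases eq_or_ne v 0 with rfl | hv
  · simp
  · have hnv : (0:ℝ) < ‖v‖ := norm_pos_iff.mpr hv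
    have hu : ‖(‖v‖⁻¹ • v)‖ = 1 := by
      rw [norm_smul, norm_inv, norm_norm, inv_mul_cancel₀ hnv.ne']
    have h := lamMin_le A _ hu
    have hinner : ⟪A (‖v‖⁻¹ • v), ‖v‖⁻¹ • v⟫ = ‖v‖⁻¹ * ‖v‖⁻¹ * ⟪A v, v⟫ := by
      rw [A.map_smul, real_inner_smul_left, real_inner_smul_right]; ring
    rw [hinner] at h
    have h2 := mul_le_mul_of_nonneg_left h (le_of_lt (by positivity : (0:ℝ) < ‖v‖ ^ 2))
    calc lamMin A * ‖v‖ ^ 2 = ‖v‖ ^ 2 * lamMin A := by ring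
    _ ≤ ‖v‖ ^ 2 * (‖v‖⁻¹ * ‖v‖⁻¹ * ⟪A v, v⟫) := h2
    _ = ⟪A v, v⟫ := by field_simp

lemma lamMin_pos (A : Euc n →L[ℝ] Euc n) (hA : IsSymPD A) : 0 < lamMin A := by
  have hsc : IsCompact (Metric.sphere (0 : Euc n) 1) := isCompact_sphere _ _
  have hsn : (Metric.sphere (0 : Euc n) 1).Nonempty := by
    refine ⟨EuclideanSpace.single (0 : Fin (n+1)) (1:ℝ), ?_⟩
    rw [mem_sphere_zero_iff_norm, EuclideanSpace.norm_single]; norm_num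
  have hcont : ContinuousOn (fun v : Euc n => ⟪A v, v⟫) (Metric.sphere 0 1) :=
    (A.continuous.inner continuous_id).continuousOn
  obtain ⟨v₀, hv₀, hmin⟩ := hsc.exists_isMinOn hsn hcont
  have hv₀n : ‖v₀‖ = 1 := mem_sphere_zero_iff_norm.mp hv₀
  have hv₀0 : v₀ ≠ 0 := by intro h; rw [h] at hv₀n; simp at hv₀n
  have hpos : 0 < ⟪A v₀, v₀⟫ := hA.2 v₀ hv₀0
  have hle : ⟪A v₀, v₀⟫ ≤ lamMin A := by
    apply le_csInf (rayleigh_nonempty A)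
    rintro t ⟨v, hv, rfl⟩
    exact hmin (mem_sphere_zero_iff_norm.mpr hv)
  linarith

lemma lamMin_ge_sub (A B : Euc n →L[ℝ] Euc n) : lamMin A - ‖A - B‖ ≤ lamMin B := by
  apply le_csInf (rayleigh_nonempty B)
  rintro t ⟨v, hv, rfl⟩
  have h1 : lamMin A ≤ ⟪A v, v⟫ := lamMin_le A v hv
  have h2 : |⟪(A - B) v, v⟫| ≤ ‖(A - B) v‖ * ‖v‖ := abs_real_inner_le_norm _ _
  have h3 : ‖(A - B) v‖ ≤ ‖A - B‖ * ‖v‖ := (A - B).le_opNorm v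
  rw [hv] at h2 h3
  have h4 : ⟪(A - B) v, v⟫ = ⟪A v, v⟫ - ⟪B v, v⟫ := by
    rw [ContinuousLinearMap.sub_apply, inner_sub_left]
  have := (abs_le.mp (h2.trans (by simpa using h3))).2
  rw [h4] at this
  linarith

lemma symm_norm_le (A : Euc n ≃L[ℝ] Euc n) (hA : IsSymPD (clm A)) (v : Euc n) :
    ‖A.symm v‖ ≤ (lamMin (clm A))⁻¹ * ‖v‖ := by
  set u := A.symm v with hu
  have hl : 0 < lamMin (clm A) := lamMin_pos _ hA
  have h1 : lamMin (clm A) * ‖u‖ ^ 2 ≤ ⟪clm A u, u⟫ := lamMin_mul_sq_le _ u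
  have h2 : clm A u = v := by simp [clm, hu]
  have h3 : ⟪v, u⟫ ≤ ‖v‖ * ‖u‖ := real_inner_le_norm _ _
  rw [h2] at h1
  rcases eq_or_lt_of_le (norm_nonneg u) with h | h
  · rw [← h]; positivity
  · have h4 : lamMin (clm A) * ‖u‖ ≤ ‖v‖ := by nlinarith
    rw [← mul_le_mul_iff_right₀ hl]
    calc lamMin (clm A) * ‖u‖ ≤ ‖v‖ := h4
    _ = lamMin (clm A) * ((lamMin (clm A))⁻¹ * ‖v‖) := by field_simp

lemma inv_bound {a b l e d : ℝ} (hl : 0 < l) (hla : l ≤ a) (hlb : l ≤ b)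
    (hab : a ≤ b + e) (he : 0 ≤ e) (hd : 0 ≤ d) :
    b⁻¹ * d ≤ a⁻¹ * d + l⁻¹ * l⁻¹ * e * d := by
  have ha : 0 < a := hl.trans_le hla
  have hb : 0 < b := hl.trans_le hlb
  have key : b⁻¹ ≤ a⁻¹ + l⁻¹ * l⁻¹ * e := by
    have h1 : b⁻¹ - a⁻¹ = (a - b) * (a⁻¹ * b⁻¹) := by field_simp
    have h2 : (a - b) * (a⁻¹ * b⁻¹) ≤ e * (a⁻¹ * b⁻¹) :=
      mul_le_mul_of_nonneg_right (by linarith) (by positivity)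
    have h3 : e * (a⁻¹ * b⁻¹) ≤ e * (l⁻¹ * l⁻¹) := by
      apply mul_le_mul_of_nonneg_left _ he
      have hai : a⁻¹ ≤ l⁻¹ := inv_anti₀ hl hla
      have hbi : b⁻¹ ≤ l⁻¹ := inv_anti₀ hl hlb
      have : (0:ℝ) < a⁻¹ := by positivity
      have : (0:ℝ) < b⁻¹ := by positivity
      nlinarith
    linarith
  nlinarith [mul_le_mul_of_nonneg_right key hd]

end AuxNNE

/-- Nested nonconcentric ellipses. -/
theorem nested_nonconcentric_ellipses (n : ℕ) (β : ℝ) (hβ : β ∈ Set.Ioo (0 : ℝ) 1)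
    (Λ : Euc n → (Euc n ≃L[ℝ] Euc n))
    (hPD : ∀ X : Euc n, IsSymPD (clm (Λ X)))
    (hHol : HolderOnCompacts Λ β)
    (K : Set (Euc n)) (hK : IsCompact K) (M : ℝ) (hM : 0 < M) :
    ∃ C > 0, ∃ r₀ > 0,
      (∀ X ∈ K, ∀ Y ∈ K, ∀ r : ℝ, 0 < r → ‖X - Y‖ ≤ M * r →
        BLam Λ X r ⊆
          BLam Λ Y (r + (lamMin (clm (Λ X)))⁻¹ * ‖X - Y‖ + C * r ^ (1 + β))) ∧
      (∀ X ∈ K, ∀ Y ∈ K, ∀ r : ℝ, 0 < r → r ≤ r₀ → ‖X - Y‖ ≤ M * r →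
        ‖X - Y‖ ≤ lamMin (clm (Λ X)) * r / 2 →
          0 < r - (lamMin (clm (Λ X)))⁻¹ * ‖X - Y‖ - C * r ^ (1 + β) ∧
          BLam Λ Y (r - (lamMin (clm (Λ X)))⁻¹ * ‖X - Y‖ - C * r ^ (1 + β)) ⊆
            BLam Λ X r) := by
  obtain ⟨hβ0, hβ1⟩ := hβ
  rcases K.eq_empty_or_nonempty with rfl | hne
  · exact ⟨1, one_pos, 1, one_pos, fun X hX => absurd hX (by simp),
      fun X hX => absurd hX (by simp)⟩
  obtain ⟨H, hH, hHol'⟩ := hHol K hK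
  -- continuity of lamMin ∘ Λ on K
  have hfc : ContinuousOn (fun X => lamMin (clm (Λ X))) K := by
    rw [Metric.continuousOn_iff]
    intro x hx ε hε
    refine ⟨min 1 ((ε / (2 * H)) ^ (β⁻¹)),
      lt_min one_pos (Real.rpow_pos_of_pos (by positivity) _), ?_⟩
    intro y hy hd
    have h1 : ‖clm (Λ y) - clm (Λ x)‖ ≤ H * ‖y - x‖ ^ β := hHol' y hy x hx
    have h1' : ‖clm (Λ x) - clm (Λ y)‖ ≤ H * ‖y - x‖ ^ β := by
      rw [norm_sub_rev]; exact h1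
    have habs : |lamMin (clm (Λ y)) - lamMin (clm (Λ x))| ≤ H * ‖y - x‖ ^ β := by
      rw [abs_sub_le_iff]
      constructor
      · linarith [lamMin_ge_sub (clm (Λ y)) (clm (Λ x))]
      · linarith [lamMin_ge_sub (clm (Λ x)) (clm (Λ y))]
    have hyx : ‖y - x‖ < (ε / (2 * H)) ^ (β⁻¹) := by
      rw [← dist_eq_norm]; exact hd.trans_le (min_le_right _ _)
    have h2 : ‖y - x‖ ^ β ≤ ((ε / (2 * H)) ^ (β⁻¹)) ^ β :=
      Real.rpow_le_rpow (norm_nonneg _) hyx.le hβ0.le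
    have h3 : ((ε / (2 * H)) ^ (β⁻¹) : ℝ) ^ β = ε / (2 * H) :=
      Real.rpow_inv_rpow (by positivity) hβ0.ne'
    rw [h3] at h2
    rw [Real.dist_eq]
    calc |lamMin (clm (Λ y)) - lamMin (clm (Λ x))| ≤ H * ‖y - x‖ ^ β := habs
      _ ≤ H * (ε / (2 * H)) := by gcongr
      _ = ε / 2 := by field_simp
      _ < ε := by linarith
  obtain ⟨X₀, hX₀, hminOn⟩ := hK.exists_isMinOn hne hfc
  set l := lamMin (clm (Λ X₀)) with hldef
  have hl : 0 < l := lamMin_pos _ (hPD X₀)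
  have hlK : ∀ X ∈ K, l ≤ lamMin (clm (Λ X)) := fun X hX => hminOn hX
  set Mb := M ^ β with hMbdef
  have hMb : 0 < Mb := Real.rpow_pos_of_pos hM β
  set C := l⁻¹ * H * Mb * (l⁻¹ * M + 1) with hCdef
  have hC : 0 < C := by positivity
  refine ⟨C, hC, min 1 ((4 * C)⁻¹ ^ β⁻¹),
    lt_min one_pos (Real.rpow_pos_of_pos (by positivity) _), ?_, ?_⟩
  · -- part (i)
    intro X hX Y hY r hr hXY
    rintro Z ⟨W, hW, rfl⟩
    rw [mem_ball_zero_iff] at hW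
    set a := lamMin (clm (Λ X)) with hadef
    set b := lamMin (clm (Λ Y)) with hbdef
    set d := ‖X - Y‖ with hddef
    have ha : 0 < a := lamMin_pos _ (hPD X)
    have hb : 0 < b := lamMin_pos _ (hPD Y)
    have hla : l ≤ a := hlK X hX
    have hlb : l ≤ b := hlK Y hY
    have hd0 : (0:ℝ) ≤ d := norm_nonneg _
    have hHd : ‖clm (Λ X) - clm (Λ Y)‖ ≤ H * d ^ β := hHol' X hX Y hY
    have hab : a ≤ b + H * d ^ β := by
      linarith [lamMin_ge_sub (clm (Λ X)) (clm (Λ Y))]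
    refine ⟨(Λ Y).symm (X - Y + (Λ X) W), mem_ball_zero_iff.mpr ?_, ?_⟩
    · -- norm of W'
      have h1 : (Λ X) W = (Λ Y) W + (clm (Λ X) - clm (Λ Y)) W := by
        simp [clm]
      have hsplit : (Λ Y).symm (X - Y + (Λ X) W)
          = (Λ Y).symm (X - Y) + W + (Λ Y).symm ((clm (Λ X) - clm (Λ Y)) W) := by
        rw [h1, ← add_assoc, map_add, map_add, ContinuousLinearEquiv.symm_apply_apply]
      have n1 : ‖(Λ Y).symm (X - Y)‖ ≤ b⁻¹ * d := symm_norm_le _ (hPD Y) _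
      have n2 : ‖(Λ Y).symm ((clm (Λ X) - clm (Λ Y)) W)‖ ≤ b⁻¹ * (H * d ^ β * ‖W‖) := by
        refine (symm_norm_le _ (hPD Y) _).trans ?_
        have h2 : ‖(clm (Λ X) - clm (Λ Y)) W‖ ≤ H * d ^ β * ‖W‖ :=
          ((clm (Λ X) - clm (Λ Y)).le_opNorm W).trans
            (mul_le_mul_of_nonneg_right hHd (norm_nonneg _))
        exact mul_le_mul_of_nonneg_left h2 (by positivity)
      have ntot : ‖(Λ Y).symm (X - Y + (Λ X) W)‖
          ≤ b⁻¹ * d + ‖W‖ + b⁻¹ * (H * d ^ β * ‖W‖) := by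
        rw [hsplit]
        exact norm_add₃_le.trans (by linarith)
      have hib : b⁻¹ * d ≤ a⁻¹ * d + l⁻¹ * l⁻¹ * (H * d ^ β) * d :=
        inv_bound hl hla hlb hab (by positivity) hd0
      have hdb : d ^ β ≤ Mb * r ^ β := by
        calc d ^ β ≤ (M * r) ^ β := Real.rpow_le_rpow hd0 hXY hβ0.le
          _ = Mb * r ^ β := Real.mul_rpow hM.le hr.le
      have hrpow : r ^ (1 + β) = r * r ^ β := by
        rw [Real.rpow_add hr, Real.rpow_one]
      have hrb : 0 < r ^ β := Real.rpow_pos_of_pos hr β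
      have t1 : l⁻¹ * l⁻¹ * (H * d ^ β) * d
          ≤ l⁻¹ * l⁻¹ * (H * (Mb * r ^ β)) * (M * r) := by
        have t1a : H * d ^ β * d ≤ H * (Mb * r ^ β) * (M * r) :=
          mul_le_mul (mul_le_mul_of_nonneg_left hdb hH.le) hXY hd0 (by positivity)
        calc l⁻¹ * l⁻¹ * (H * d ^ β) * d = l⁻¹ * l⁻¹ * (H * d ^ β * d) := by ring
          _ ≤ l⁻¹ * l⁻¹ * (H * (Mb * r ^ β) * (M * r)) :=
            mul_le_mul_of_nonneg_left t1a (by positivity)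
          _ = l⁻¹ * l⁻¹ * (H * (Mb * r ^ β)) * (M * r) := by ring
      have t2 : b⁻¹ * (H * d ^ β * ‖W‖) ≤ l⁻¹ * (H * (Mb * r ^ β) * r) := by
        have hbl : b⁻¹ ≤ l⁻¹ := inv_anti₀ hl hlb
        have t2a : H * d ^ β * ‖W‖ ≤ H * (Mb * r ^ β) * r :=
          mul_le_mul (mul_le_mul_of_nonneg_left hdb hH.le) hW.le (norm_nonneg _)
            (by positivity)
        exact mul_le_mul hbl t2a (by positivity) (by positivity)
      have hCr : C * r ^ (1 + β)
          = l⁻¹ * l⁻¹ * (H * (Mb * r ^ β)) * (M * r) + l⁻¹ * (H * (Mb * r ^ β) * r) := by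
        rw [hrpow, hCdef]; ring
      have : b⁻¹ * d + ‖W‖ + b⁻¹ * (H * d ^ β * ‖W‖)
          < r + a⁻¹ * d + C * r ^ (1 + β) := by
        rw [hCr]; linarith
      linarith
    · show Y + (Λ Y) ((Λ Y).symm (X - Y + (Λ X) W)) = X + (Λ X) W
      rw [ContinuousLinearEquiv.apply_symm_apply]; abel
  · -- part (ii)
    intro X hX Y hY r hr hrr₀ hXY hhalf
    set a := lamMin (clm (Λ X)) with hadef
    set d := ‖X - Y‖ with hddef
    have ha : 0 < a := lamMin_pos _ (hPD X)
    have hla : l ≤ a := hlK X hX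
    have hd0 : (0:ℝ) ≤ d := norm_nonneg _
    have hrb : 0 < r ^ β := Real.rpow_pos_of_pos hr β
    have hrpow : r ^ (1 + β) = r * r ^ β := by
      rw [Real.rpow_add hr, Real.rpow_one]
    have hCr4 : C * r ^ β ≤ 1 / 4 := by
      have h1 : r ≤ (4 * C)⁻¹ ^ β⁻¹ := hrr₀.trans (min_le_right _ _)
      have h2 : r ^ β ≤ ((4 * C)⁻¹ ^ β⁻¹) ^ β :=
        Real.rpow_le_rpow hr.le h1 hβ0.le
      have h3 : (((4 * C)⁻¹ : ℝ) ^ β⁻¹) ^ β = (4 * C)⁻¹ :=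
        Real.rpow_inv_rpow (by positivity) hβ0.ne'
      rw [h3] at h2
      calc C * r ^ β ≤ C * (4 * C)⁻¹ := mul_le_mul_of_nonneg_left h2 hC.le
        _ = 1 / 4 := by field_simp
    have had : a⁻¹ * d ≤ r / 2 := by
      have h1 : a⁻¹ * d ≤ a⁻¹ * (a * r / 2) := mul_le_mul_of_nonneg_left hhalf (by positivity)
      have h2 : a⁻¹ * (a * r / 2) = r / 2 := by field_simp
      linarith
    have hCr : C * r ^ (1 + β) ≤ r / 4 := by
      calc C * r ^ (1 + β) = (C * r ^ β) * r := by rw [hrpow]; ring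
        _ ≤ (1 / 4) * r := mul_le_mul_of_nonneg_right hCr4 hr.le
        _ = r / 4 := by ring
    have hspos : 0 < r - a⁻¹ * d - C * r ^ (1 + β) := by linarith
    refine ⟨hspos, ?_⟩
    rintro Z ⟨W, hW, rfl⟩
    rw [mem_ball_zero_iff] at hW
    have hnn1 : (0:ℝ) ≤ a⁻¹ * d := by positivity
    have hnn2 : (0:ℝ) ≤ C * r ^ (1 + β) := by positivity
    have hWr : ‖W‖ ≤ r := by linarith
    refine ⟨(Λ X).symm (Y - X + (Λ Y) W), mem_ball_zero_iff.mpr ?_, ?_⟩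
    · have hHd : ‖clm (Λ Y) - clm (Λ X)‖ ≤ H * d ^ β := by
        rw [norm_sub_rev]; exact hHol' X hX Y hY
      have h1 : (Λ Y) W = (Λ X) W + (clm (Λ Y) - clm (Λ X)) W := by
        simp [clm]
      have hsplit : (Λ X).symm (Y - X + (Λ Y) W)
          = (Λ X).symm (Y - X) + W + (Λ X).symm ((clm (Λ Y) - clm (Λ X)) W) := by
        rw [h1, ← add_assoc, map_add, map_add, ContinuousLinearEquiv.symm_apply_apply]
      have n1 : ‖(Λ X).symm (Y - X)‖ ≤ a⁻¹ * d := by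
        have := symm_norm_le _ (hPD X) (Y - X)
        rwa [norm_sub_rev] at this
      have n2 : ‖(Λ X).symm ((clm (Λ Y) - clm (Λ X)) W)‖ ≤ a⁻¹ * (H * d ^ β * ‖W‖) := by
        refine (symm_norm_le _ (hPD X) _).trans ?_
        have h2 : ‖(clm (Λ Y) - clm (Λ X)) W‖ ≤ H * d ^ β * ‖W‖ :=
          ((clm (Λ Y) - clm (Λ X)).le_opNorm W).trans
            (mul_le_mul_of_nonneg_right hHd (norm_nonneg _))
        exact mul_le_mul_of_nonneg_left h2 (by positivity)
      have ntot : ‖(Λ X).symm (Y - X + (Λ Y) W)‖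
          ≤ a⁻¹ * d + ‖W‖ + a⁻¹ * (H * d ^ β * ‖W‖) := by
        rw [hsplit]
        exact norm_add₃_le.trans (by linarith)
      have hdb : d ^ β ≤ Mb * r ^ β := by
        calc d ^ β ≤ (M * r) ^ β := Real.rpow_le_rpow hd0 hXY hβ0.le
          _ = Mb * r ^ β := Real.mul_rpow hM.le hr.le
      have t2 : a⁻¹ * (H * d ^ β * ‖W‖) ≤ l⁻¹ * (H * (Mb * r ^ β) * r) := by
        have hal : a⁻¹ ≤ l⁻¹ := inv_anti₀ hl hla
        have t2a : H * d ^ β * ‖W‖ ≤ H * (Mb * r ^ β) * r :=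
          mul_le_mul (mul_le_mul_of_nonneg_left hdb hH.le) hWr (norm_nonneg _)
            (by positivity)
        exact mul_le_mul hal t2a (by positivity) (by positivity)
      have hCge : l⁻¹ * (H * (Mb * r ^ β) * r) ≤ C * r ^ (1 + β) := by
        rw [hrpow, hCdef]
        have h0 : (0:ℝ) ≤ l⁻¹ * H * Mb * (r ^ β * r) := by positivity
        have key : l⁻¹ * H * Mb * (l⁻¹ * M + 1) * (r * r ^ β)
            = l⁻¹ * (H * (Mb * r ^ β) * r) + l⁻¹ * M * (l⁻¹ * H * Mb * (r ^ β * r)) := by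
          ring
        have h1 : (0:ℝ) ≤ l⁻¹ * M * (l⁻¹ * H * Mb * (r ^ β * r)) :=
          mul_nonneg (mul_nonneg (inv_pos.mpr hl).le hM.le) h0
        linarith
      linarith
    · show X + (Λ X) ((Λ X).symm (Y - X + (Λ Y) W)) = Y + (Λ Y) W
      rw [ContinuousLinearEquiv.apply_symm_apply]; abel
end

section
/- Let Σ ⊂ ℝ^{n+1} be closed and K ⊂ ℝ^{n+1} compact with Σ ∩ K ≠ ∅. Set δ_K = min{λ_min(K), e_Λ(K)^{-1}}. Let δ ∈ (0, δ_K), X, X̄ ∈ Σ ∩ K, r > 0, r' = λ_max(K)·r, and let P be an affine n-plane through X. Write B_Λ(X, X̄, r) = X + Λ(X̄)·B(0,r). If D[Σ ∩ B(X,r'); P ∩ B(X,r')] ≤ δ·r', then D[Σ ∩ B_Λ(X,X̄,r); P ∩ B_Λ(X,X̄,r)] ≤ (2 + e_Λ(K))·δ·r'. -/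
open MeasureTheory Metric Filter
open scoped RealInnerProductSpace ENNReal Topology

namespace Aux
variable {n : ℕ}

lemma rayleigh_nonempty (A : Euc n →L[ℝ] Euc n) :
    {t : ℝ | ∃ v : Euc n, ‖v‖ = 1 ∧ ⟪A v, v⟫ = t}.Nonempty := by
  refine ⟨_, EuclideanSpace.single (0 : Fin (n+1)) (1:ℝ), ?_, rfl⟩
  simp [EuclideanSpace.norm_single]

lemma rayleigh_bddAbove (A : Euc n →L[ℝ] Euc n) :
    BddAbove {t : ℝ | ∃ v : Euc n, ‖v‖ = 1 ∧ ⟪A v, v⟫ = t} := by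
  refine ⟨‖A‖, ?_⟩
  rintro t ⟨v, hv, rfl⟩
  calc ⟪A v, v⟫ ≤ ‖A v‖ * ‖v‖ := real_inner_le_norm _ _
    _ ≤ ‖A‖ * ‖v‖ * ‖v‖ := by
        have := A.le_opNorm v
        nlinarith [norm_nonneg v]
    _ = ‖A‖ := by rw [hv]; ring

lemma rayleigh_bddBelow {A : Euc n →L[ℝ] Euc n} (hA : IsSymPD A) :
    (0:ℝ) ∈ lowerBounds {t : ℝ | ∃ v : Euc n, ‖v‖ = 1 ∧ ⟪A v, v⟫ = t} := by
  rintro t ⟨v, hv, rfl⟩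
  have hv0 : v ≠ 0 := by intro h; rw [h] at hv; simp at hv
  exact (hA.2 v hv0).le

lemma rayleigh_unit {A : Euc n →L[ℝ] Euc n} {v : Euc n} (hv : v ≠ 0) :
    (⟪A v, v⟫ / ‖v‖ ^ 2) ∈ {t : ℝ | ∃ w : Euc n, ‖w‖ = 1 ∧ ⟪A w, w⟫ = t} := by
  have hn : (0:ℝ) < ‖v‖ := norm_pos_iff.mpr hv
  refine ⟨‖v‖⁻¹ • v, ?_, ?_⟩
  · rw [norm_smul]; simp [abs_of_pos (inv_pos.mpr hn), inv_mul_cancel₀ hn.ne']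
  · rw [A.map_smul, real_inner_smul_left, real_inner_smul_right, pow_two, div_eq_mul_inv,
      mul_inv]
    ring

lemma lamMin_nonneg {A : Euc n →L[ℝ] Euc n} (hA : IsSymPD A) : 0 ≤ lamMin A :=
  le_csInf (rayleigh_nonempty A) fun _ ht => rayleigh_bddBelow hA ht

lemma lamMin_mul_sq_le {A : Euc n →L[ℝ] Euc n} (hA : IsSymPD A) (v : Euc n) :
    lamMin A * ‖v‖ ^ 2 ≤ ⟪A v, v⟫ := by
  by_cases hv : v = 0
  · simp [hv]
  · have hn : (0:ℝ) < ‖v‖ := norm_pos_iff.mpr hv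
    have h := csInf_le ⟨0, rayleigh_bddBelow hA⟩ (rayleigh_unit (A := A) hv)
    rw [le_div_iff₀ (by positivity)] at h
    exact h

lemma inner_le_lamMax_mul_sq (A : Euc n →L[ℝ] Euc n) (v : Euc n) :
    ⟪A v, v⟫ ≤ lamMax A * ‖v‖ ^ 2 := by
  by_cases hv : v = 0
  · simp [hv]
  · have hn : (0:ℝ) < ‖v‖ := norm_pos_iff.mpr hv
    have h := le_csSup (rayleigh_bddAbove A) (rayleigh_unit (A := A) hv)
    rw [div_le_iff₀ (by positivity)] at h
    exact h

lemma lamMax_nonneg {A : Euc n →L[ℝ] Euc n} (hA : IsSymPD A) : 0 ≤ lamMax A := by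
  obtain ⟨t, v, hv, rfl⟩ := rayleigh_nonempty A
  have hv0 : v ≠ 0 := by intro h; rw [h] at hv; simp at hv
  exact le_trans (hA.2 v hv0).le (le_csSup (rayleigh_bddAbove A) ⟨v, hv, rfl⟩)

lemma sympd_cauchy {A : Euc n →L[ℝ] Euc n} (hA : IsSymPD A) (v w : Euc n) :
    ⟪A v, w⟫ ^ 2 ≤ ⟪A v, v⟫ * ⟪A w, w⟫ := by
  have key : ∀ x : ℝ, 0 ≤ ⟪A w, w⟫ * (x * x) + (2 * ⟪A v, w⟫) * x + ⟪A v, v⟫ := by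
    intro x
    have h1 : 0 ≤ ⟪A (v + x • w), v + x • w⟫ := by
      by_cases h : v + x • w = 0
      · rw [h]; simp
      · exact (hA.2 _ h).le
    have h2 : ⟪A (v + x • w), v + x • w⟫
        = ⟪A v, v⟫ + x * ⟪A v, w⟫ + x * ⟪A w, v⟫ + x * x * ⟪A w, w⟫ := by
      rw [map_add, A.map_smul, inner_add_left, inner_add_right, inner_add_right,
        real_inner_smul_left, real_inner_smul_right, real_inner_smul_left,
        real_inner_smul_right]
      ring
    have h3 : ⟪A w, v⟫ = ⟪A v, w⟫ := by
      rw [hA.1 w v, real_inner_comm]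
    rw [h2, h3] at h1; linarith
  have := discrim_le_zero key
  rw [discrim] at this
  nlinarith

lemma norm_apply_le_lamMax {A : Euc n →L[ℝ] Euc n} (hA : IsSymPD A) (v : Euc n) :
    ‖A v‖ ≤ lamMax A * ‖v‖ := by
  have hM := lamMax_nonneg hA
  by_cases h : A v = 0
  · rw [h, norm_zero]; positivity
  · have hAv : (0:ℝ) < ‖A v‖ := norm_pos_iff.mpr h
    have hcs := sympd_cauchy hA v (A v)
    have h1 : ⟪A v, A v⟫ = ‖A v‖ ^ 2 := real_inner_self_eq_norm_sq _
    have h2 := inner_le_lamMax_mul_sq A v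
    have h3 := inner_le_lamMax_mul_sq A (A v)
    have h4 : (0:ℝ) ≤ ⟪A (A v), A v⟫ := (hA.2 _ h).le
    have hv0 : v ≠ 0 := by rintro rfl; simp at h
    have h6 : (0:ℝ) ≤ ⟪A v, v⟫ := (hA.2 v hv0).le
    have h7 : ⟪A v, v⟫ * ⟪A (A v), A v⟫ ≤ (lamMax A * ‖v‖ ^ 2) * (lamMax A * ‖A v‖ ^ 2) :=
      mul_le_mul h2 h3 h4 (by positivity)
    have h5 : ‖A v‖ ^ 2 * ‖A v‖ ^ 2 ≤ (lamMax A * ‖v‖) ^ 2 * ‖A v‖ ^ 2 := by nlinarith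
    have h8 : ‖A v‖ ^ 2 ≤ (lamMax A * ‖v‖) ^ 2 :=
      le_of_mul_le_mul_right h5 (by positivity)
    have h9 := Real.sqrt_le_sqrt h8
    rwa [Real.sqrt_sq (norm_nonneg _), Real.sqrt_sq (by positivity)] at h9

lemma lamMin_mul_norm_le {A : Euc n →L[ℝ] Euc n} (hA : IsSymPD A) (v : Euc n) :
    lamMin A * ‖v‖ ≤ ‖A v‖ := by
  by_cases hv : v = 0
  · simp [hv]
  · have hn : (0:ℝ) < ‖v‖ := norm_pos_iff.mpr hv
    have h1 := lamMin_mul_sq_le hA v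
    have h2 := real_inner_le_norm (A v) v
    nlinarith [lamMin_nonneg hA]

end Aux

set_option maxHeartbeats 2000000 in
/-- Euclidean flatness implies anisotropic flatness. -/
theorem euclidean_flat_implies_anisotropic_flat (n : ℕ)
    (Λ : Euc n → (Euc n ≃L[ℝ] Euc n))
    (hPD : ∀ X : Euc n, IsSymPD (clm (Λ X)))
    (S : Set (Euc n)) (hS : IsClosed S)
    (K : Set (Euc n)) (hK : IsCompact K) (hSK : (S ∩ K).Nonempty)
    (δ : ℝ)
    (hδ : δ ∈ Set.Ioo (0 : ℝ) (min (lamMinOn Λ (S ∩ K)) (eLam Λ (S ∩ K))⁻¹))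
    (X Xb : Euc n) (hX : X ∈ S ∩ K) (hXb : Xb ∈ S ∩ K)
    (r : ℝ) (hr : 0 < r)
    (P : AffineSubspace ℝ (Euc n)) (hXP : X ∈ P)
    (hPdim : Module.finrank ℝ P.direction = n)
    (hflat : Metric.hausdorffDist (S ∩ Metric.ball X (lamMaxOn Λ (S ∩ K) * r))
        ((P : Set (Euc n)) ∩ Metric.ball X (lamMaxOn Λ (S ∩ K) * r)) ≤
        δ * (lamMaxOn Λ (S ∩ K) * r)) :
    Metric.hausdorffDist (S ∩ BLam2 Λ X Xb r) ((P : Set (Euc n)) ∩ BLam2 Λ X Xb r) ≤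
      (2 + eLam Λ (S ∩ K)) * δ * (lamMaxOn Λ (S ∩ K) * r) := by
  obtain ⟨hδ0, hδ1⟩ := hδ
  set lm := lamMinOn Λ (S ∩ K) with hlm_def
  set lM := lamMaxOn Λ (S ∩ K) with hlM_def
  set e := eLam Λ (S ∩ K) with he_def
  have hlm_pos : 0 < lm := hδ0.trans (hδ1.trans_le (min_le_left _ _))
  have hie : 0 < e⁻¹ := hδ0.trans (hδ1.trans_le (min_le_right _ _))
  have he_pos : 0 < e := inv_pos.mp hie
  have helm : e = lM / lm := rfl
  have hlM_eq : lM = e * lm := by rw [helm, div_mul_cancel₀ _ hlm_pos.ne']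
  have hlM_pos : 0 < lM := by rw [hlM_eq]; positivity
  -- operator bounds for Λ Xb
  have hXb1 : Metric.infDist Xb (S ∩ K) ≤ 1 := by
    rw [Metric.infDist_zero_of_mem hXb]; norm_num
  have hbddb : BddBelow ((fun X => lamMin (clm (Λ X))) ''
      {X : Euc n | Metric.infDist X (S ∩ K) ≤ 1}) := by
    refine ⟨0, ?_⟩; rintro t ⟨X', -, rfl⟩; exact Aux.lamMin_nonneg (hPD X')
  have hlm_le : lm ≤ lamMin (clm (Λ Xb)) := csInf_le hbddb ⟨Xb, hXb1, rfl⟩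
  have hbdda : BddAbove ((fun X => lamMax (clm (Λ X))) ''
      {X : Euc n | Metric.infDist X (S ∩ K) ≤ 1}) := by
    by_contra hb
    exact hlM_pos.ne' (Real.sSup_of_not_bddAbove hb)
  have hlM_ge : lamMax (clm (Λ Xb)) ≤ lM := le_csSup hbdda ⟨Xb, hXb1, rfl⟩
  have hup : ∀ v : Euc n, ‖(Λ Xb) v‖ ≤ lM * ‖v‖ := by
    intro v
    calc ‖(Λ Xb) v‖ = ‖clm (Λ Xb) v‖ := rfl
      _ ≤ lamMax (clm (Λ Xb)) * ‖v‖ := Aux.norm_apply_le_lamMax (hPD Xb) v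
      _ ≤ lM * ‖v‖ := by nlinarith [norm_nonneg v]
  have hlow : ∀ v : Euc n, lm * ‖v‖ ≤ ‖(Λ Xb) v‖ := by
    intro v
    calc lm * ‖v‖ ≤ lamMin (clm (Λ Xb)) * ‖v‖ := by nlinarith [norm_nonneg v]
      _ ≤ ‖clm (Λ Xb) v‖ := Aux.lamMin_mul_norm_le (hPD Xb) v
  have hlowsymm : ∀ W : Euc n, lm * ‖(Λ Xb).symm W‖ ≤ ‖W‖ := by
    intro W
    have := hlow ((Λ Xb).symm W)
    rwa [(Λ Xb).apply_symm_apply] at this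
  set r' := lM * r with hr'def
  have hr'_pos : 0 < r' := by positivity
  set ε := δ * r' with hεdef
  have hε_pos : 0 < ε := by positivity
  -- description of the ellipse
  have hmemE : ∀ W : Euc n, W ∈ BLam2 Λ X Xb r ↔ ‖(Λ Xb).symm (W - X)‖ < r := by
    intro W
    constructor
    · rintro ⟨w, hw, rfl⟩
      rw [mem_ball_zero_iff] at hw
      simpa using hw
    · intro h
      exact ⟨(Λ Xb).symm (W - X), mem_ball_zero_iff.mpr h, by simp⟩
  have hEsub : BLam2 Λ X Xb r ⊆ ball X r' := by
    rintro W ⟨w, hw, rfl⟩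
    rw [mem_ball_zero_iff] at hw
    rw [mem_ball, dist_eq_norm, add_sub_cancel_left]
    calc ‖(Λ Xb) w‖ ≤ lM * ‖w‖ := hup w
      _ < lM * r := by nlinarith
  have hXB' : X ∈ ball X r' := mem_ball_self hr'_pos
  have hSB'ne : (S ∩ ball X r').Nonempty := ⟨X, hX.1, hXB'⟩
  have hPB'ne : ((P : Set (Euc n)) ∩ ball X r').Nonempty := ⟨X, hXP, hXB'⟩
  have hfin : EMetric.hausdorffEdist (S ∩ ball X r') ((P : Set (Euc n)) ∩ ball X r') ≠ ⊤ :=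
    Metric.hausdorffEdist_ne_top_of_nonempty_of_bounded hSB'ne hPB'ne
      (Metric.isBounded_ball.subset Set.inter_subset_right)
      (Metric.isBounded_ball.subset Set.inter_subset_right)
  have hPmem : ∀ Z : Euc n, Z ∈ (P : Set (Euc n)) → ∀ c : ℝ,
      X + c • (Z - X) ∈ (P : Set (Euc n)) := by
    intro Z hZ c
    have := AffineSubspace.smul_vsub_vadd_mem P c hZ hXP hXP
    simpa [vsub_eq_sub, vadd_eq_add, add_comm] using this
  have hscale : ∀ (Z : Euc n) (c : ℝ), c ≤ 1 →
      dist Z (X + c • (Z - X)) = (1 - c) * ‖Z - X‖ := by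
    intro Z c hc
    rw [dist_eq_norm]
    have h : Z - (X + c • (Z - X)) = (1 - c) • (Z - X) := by
      rw [sub_smul, one_smul]; abel
    rw [h, norm_smul, Real.norm_eq_abs, abs_of_nonneg (by linarith)]
  -- the target bound
  have hgoal : (2 + e) * δ * r' = (2 + e) * ε := by rw [hεdef]; ring
  rw [hgoal]
  apply Metric.hausdorffDist_le_of_mem_dist (by positivity)
  · -- every point of S ∩ E is close to P ∩ E
    rintro Y ⟨hYS, hYE⟩
    set η := ε / (1 + e) with hηdef
    have hη_pos : 0 < η := by positivity
    have hYB' : Y ∈ ball X r' := hEsub hYE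
    have hinf : Metric.infDist Y ((P : Set (Euc n)) ∩ ball X r') ≤ ε :=
      le_trans (Metric.infDist_le_hausdorffDist_of_mem (Set.mem_inter hYS hYB') hfin) hflat
    obtain ⟨Z, hZPB, hZd⟩ := (Metric.infDist_lt_iff hPB'ne).mp
      (lt_of_le_of_lt hinf (by linarith : ε < ε + η))
    set s := (ε + η) / lm with hsdef
    have hs_pos : 0 < s := by positivity
    have hy : ‖(Λ Xb).symm (Y - X)‖ < r := (hmemE Y).mp hYE
    have hyz : ‖(Λ Xb).symm (Y - X) - (Λ Xb).symm (Z - X)‖ ≤ s := by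
      have h1 : lm * ‖(Λ Xb).symm (Y - X) - (Λ Xb).symm (Z - X)‖ ≤ ‖Y - Z‖ := by
        have h2 := hlowsymm (Y - Z)
        have h3 : (Λ Xb).symm (Y - Z)
            = (Λ Xb).symm (Y - X) - (Λ Xb).symm (Z - X) := by
          rw [← _root_.map_sub]; congr 1; abel
        rwa [h3] at h2
      rw [hsdef, le_div_iff₀ hlm_pos, mul_comm]
      exact h1.trans (by rw [← dist_eq_norm]; exact hZd.le)
    have hz : ‖(Λ Xb).symm (Z - X)‖ < r + s := by
      have h4 := norm_sub_le ((Λ Xb).symm (Y - X))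
        ((Λ Xb).symm (Y - X) - (Λ Xb).symm (Z - X))
      have h5 : (Λ Xb).symm (Y - X) - ((Λ Xb).symm (Y - X) - (Λ Xb).symm (Z - X))
          = (Λ Xb).symm (Z - X) := by abel
      rw [h5] at h4
      linarith
    set c := r / (r + s) with hcdef
    have hc0 : 0 < c := by positivity
    have hc1 : c ≤ 1 := by rw [hcdef, div_le_one (by positivity)]; linarith
    refine ⟨X + c • (Z - X), ⟨hPmem Z hZPB.1 c, ?_⟩, ?_⟩
    · rw [hmemE, add_sub_cancel_left, _root_.map_smul, norm_smul, Real.norm_eq_abs, abs_of_pos hc0]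
      calc c * ‖(Λ Xb).symm (Z - X)‖ < c * (r + s) := by
            exact mul_lt_mul_of_pos_left hz hc0
        _ = r := by rw [hcdef]; field_simp
    · have hZX : ‖Z - X‖ ≤ r' := by
        have := hZPB.2; rw [mem_ball, dist_eq_norm] at this; exact this.le
      have h1c0 : 0 ≤ 1 - c := by linarith
      have h1c : 1 - c ≤ s / r := by
        rw [hcdef]
        have h5 : 1 - r / (r + s) = s / (r + s) := by field_simp; ring
        rw [h5, div_le_div_iff₀ (by positivity) hr]
        nlinarith
      calc dist Y (X + c • (Z - X)) ≤ dist Y Z + dist Z (X + c • (Z - X)) :=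
            dist_triangle _ _ _
        _ ≤ (ε + η) + (s / r) * r' := by
            rw [hscale Z c hc1]
            have h6 : (1 - c) * ‖Z - X‖ ≤ (s / r) * r' :=
              mul_le_mul h1c hZX (norm_nonneg _) (by positivity)
            linarith
        _ = (ε + η) + (ε + η) * e := by
            rw [hsdef, hr'def, helm]
            field_simp
        _ = (2 + e) * ε := by
            rw [hηdef]
            field_simp
            ring
  · -- every point of P ∩ E is close to S ∩ E
    rintro Z ⟨hZP, hZE⟩
    have hεlm : ε < lm * r := by
      rw [hεdef, hr'def, hlM_eq]
      calc δ * (e * lm * r) < e⁻¹ * (e * lm * r) := by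
            have h7 : δ < e⁻¹ := hδ1.trans_le (min_le_right _ _)
            have : 0 < e * lm * r := by positivity
            exact mul_lt_mul_of_pos_right h7 this
        _ = lm * r := by field_simp
    set η := min (ε / (1 + e)) ((lm * r - ε) / 2) with hηdef
    have hη_pos : 0 < η := by
      apply lt_min (by positivity)
      linarith
    have hη1 : η ≤ ε / (1 + e) := min_le_left _ _
    have hη2 : η ≤ (lm * r - ε) / 2 := min_le_right _ _
    set s := (ε + η) / lm with hsdef
    have hs_pos : 0 < s := by positivity
    have hsr : s < r := by
      rw [hsdef, div_lt_iff₀ hlm_pos]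
      nlinarith
    set c := 1 - s / r with hcdef
    have hc0 : 0 < c := by
      rw [hcdef]
      have : s / r < 1 := by rw [div_lt_one hr]; exact hsr
      linarith
    have hc1 : c ≤ 1 := by
      rw [hcdef]
      have : 0 < s / r := by positivity
      linarith
    have hz : ‖(Λ Xb).symm (Z - X)‖ < r := (hmemE Z).mp hZE
    have hZX : ‖Z - X‖ < r' := by
      have := hEsub hZE; rwa [mem_ball, dist_eq_norm] at this
    have hZ'P : X + c • (Z - X) ∈ (P : Set (Euc n)) := hPmem Z hZP c
    have hZ'B' : X + c • (Z - X) ∈ ball X r' := by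
      rw [mem_ball, dist_eq_norm, add_sub_cancel_left, norm_smul, Real.norm_eq_abs,
        abs_of_pos hc0]
      calc c * ‖Z - X‖ ≤ 1 * ‖Z - X‖ :=
            mul_le_mul_of_nonneg_right hc1 (norm_nonneg _)
        _ = ‖Z - X‖ := one_mul _
        _ < r' := hZX
    have hinf : Metric.infDist (X + c • (Z - X)) (S ∩ ball X r') ≤ ε := by
      refine le_trans (Metric.infDist_le_hausdorffDist_of_mem (Set.mem_inter hZ'P hZ'B') ?_) ?_
      · rw [EMetric.hausdorffEdist_comm]; exact hfin
      · rw [Metric.hausdorffDist_comm]; exact hflat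
    obtain ⟨Y, hYSB, hYd⟩ := (Metric.infDist_lt_iff hSB'ne).mp
      (lt_of_le_of_lt hinf (by linarith : ε < ε + η))
    have hyz : ‖(Λ Xb).symm (Y - X) - c • (Λ Xb).symm (Z - X)‖ ≤ s := by
      have h1 : lm * ‖(Λ Xb).symm (Y - X) - c • (Λ Xb).symm (Z - X)‖
          ≤ ‖Y - (X + c • (Z - X))‖ := by
        have h2 := hlowsymm (Y - (X + c • (Z - X)))
        have h3 : (Λ Xb).symm (Y - (X + c • (Z - X)))
            = (Λ Xb).symm (Y - X) - c • (Λ Xb).symm (Z - X) := by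
          rw [show Y - (X + c • (Z - X)) = (Y - X) - c • (Z - X) by abel, _root_.map_sub, _root_.map_smul]
        rwa [h3] at h2
      rw [hsdef, le_div_iff₀ hlm_pos, mul_comm]
      refine h1.trans ?_
      rw [← dist_eq_norm, dist_comm]
      exact hYd.le
    have hyE : Y ∈ BLam2 Λ X Xb r := by
      rw [hmemE]
      calc ‖(Λ Xb).symm (Y - X)‖
          ≤ ‖c • (Λ Xb).symm (Z - X)‖ + ‖(Λ Xb).symm (Y - X) - c • (Λ Xb).symm (Z - X)‖ := by
            have h4 := norm_add_le (c • (Λ Xb).symm (Z - X))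
              ((Λ Xb).symm (Y - X) - c • (Λ Xb).symm (Z - X))
            have h5 : c • (Λ Xb).symm (Z - X) + ((Λ Xb).symm (Y - X) - c • (Λ Xb).symm (Z - X))
                = (Λ Xb).symm (Y - X) := by abel
            rwa [h5] at h4
        _ < c * r + s := by
            rw [norm_smul, Real.norm_eq_abs, abs_of_pos hc0]
            have := mul_lt_mul_of_pos_left hz hc0
            linarith
        _ = r := by rw [hcdef]; field_simp; ring
    refine ⟨Y, ⟨hYSB.1, hyE⟩, ?_⟩
    calc dist Z Y ≤ dist Z (X + c • (Z - X)) + dist (X + c • (Z - X)) Y := dist_triangle _ _ _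
      _ ≤ (1 - c) * ‖Z - X‖ + (ε + η) := by
          rw [hscale Z c hc1]
          have h9 : dist (X + c • (Z - X)) Y ≤ ε + η := hYd.le
          rw [dist_comm] at h9
          linarith
      _ ≤ (s / r) * r' + (ε + η) := by
          have h6 : (1 - c) * ‖Z - X‖ ≤ (s / r) * r' := by
            rw [hcdef, sub_sub_cancel]
            exact mul_le_mul_of_nonneg_left hZX.le (by positivity)
          linarith
      _ = (ε + η) * e + (ε + η) := by
          rw [hsdef, hr'def, helm]
          field_simp
      _ ≤ (2 + e) * ε := by
          have h8 : η * (1 + e) ≤ ε := by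
            rw [← le_div_iff₀ (by positivity)]
            exact hη1
          nlinarith
end

section
/- Suppose μ and Λ satisfy the continuity and density assumptions of Theorem 1. Let K ⊂ ℝ^{n+1} be compact, X₀ ∈ Σ ∩ K, let μ̃ be the push-forward of μ under the map Z ↦ Λ(X₀)^{-1}Z, and set Y₀ = Λ(X₀)^{-1}X₀. Then there exist C_K > 0 and r_K > 0, depending only on K, Λ and n, such that for all r ∈ (0, r_K]: | (n+2)/(ω_n r^{n+2}) · ∫_{B(Y₀,r)} |Z − Y₀|² dμ̃(Z) − n | ≤ C_K·r^α. -/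
open MeasureTheory Metric Filter
open scoped RealInnerProductSpace ENNReal Topology

section Aux

open Real Set

lemma omegaN_pos (n : ℕ) : 0 < omegaN n := by
  apply ENNReal.toReal_pos
  · exact (measure_ball_pos volume (0 : EuclideanSpace ℝ (Fin n)) one_pos).ne'
  · exact measure_ball_lt_top.ne

lemma map_symm_ball {n : ℕ} (Λ : Euc n → (Euc n ≃L[ℝ] Euc n)) (X₀ : Euc n)
    (μ : MeasureTheory.Measure (Euc n)) (t : ℝ) :
    MeasureTheory.Measure.map (fun Z : Euc n => (Λ X₀).symm Z) μ
      (Metric.ball ((Λ X₀).symm X₀) t) = μ (BLam Λ X₀ t) := by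
  rw [MeasureTheory.Measure.map_apply (Λ X₀).symm.continuous.measurable measurableSet_ball]
  congr 1
  ext Z
  simp only [Set.mem_preimage, Metric.mem_ball, dist_eq_norm, BLam, Set.mem_image,
    mem_ball_zero_iff]
  constructor
  · intro hZ
    refine ⟨(Λ X₀).symm Z - (Λ X₀).symm X₀, ?_, ?_⟩
    · simpa using hZ
    · rw [map_sub]
      simp only [ContinuousLinearEquiv.apply_symm_apply]
      abel
  · rintro ⟨W, hW, rfl⟩
    rw [map_add, ContinuousLinearEquiv.symm_apply_apply, add_sub_cancel_left]
    simpa using hW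

end Aux

set_option maxHeartbeats 4000000 in
/-- Trace moment estimate. -/
theorem trace_moment_estimate (n : ℕ) (α β : ℝ)
    (hα : α ∈ Set.Ioo (0 : ℝ) 1) (hβ : β ∈ Set.Ioo (0 : ℝ) 1)
    (Λ : Euc n → (Euc n ≃L[ℝ] Euc n))
    (hPD : ∀ X : Euc n, IsSymPD (clm (Λ X)))
    (hHol : HolderOnCompacts Λ β)
    (μ : Measure (Euc n)) [IsLocallyFiniteMeasure μ]
    (hden : DensityHolder Λ μ α)
    (K : Set (Euc n)) (hK : IsCompact K)
    (X₀ : Euc n) (hX₀ : X₀ ∈ msupport μ ∩ K)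
    (Y₀ : Euc n) (hY₀ : Y₀ = (Λ X₀).symm X₀)
    (μt : Measure (Euc n))
    (hμt : μt = Measure.map (fun Z : Euc n => (Λ X₀).symm Z) μ) :
    ∃ C > 0, ∃ rK > 0, ∀ r : ℝ, 0 < r → r ≤ rK →
      |((n + 2 : ℝ) / (omegaN n * r ^ (n + 2))) *
          (∫ Z in Metric.ball Y₀ r, ‖Z - Y₀‖ ^ 2 ∂μt) - n| ≤ C * r ^ α := by
  obtain ⟨hα0, hα1⟩ := hα
  obtain ⟨C, hC, hbound⟩ := hden K hK
  have hω : 0 < omegaN n := omegaN_pos n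
  set ω := omegaN n with hωdef
  -- the push-forward of μ evaluates ellipses on balls
  have hmapball : ∀ t : ℝ, μt (Metric.ball Y₀ t) = μ (BLam Λ X₀ t) := by
    intro t
    rw [hμt, hY₀]
    exact map_symm_ball Λ X₀ μ t
  -- finiteness
  have hfin1 : μt (Metric.ball Y₀ 1) < ⊤ := by
    rw [hmapball]
    have hsub : BLam Λ X₀ 1 ⊆ Metric.closedBall X₀ ‖clm (Λ X₀)‖ := by
      rintro Z ⟨W, hW, rfl⟩
      rw [Metric.mem_closedBall, dist_eq_norm, add_sub_cancel_left]
      calc ‖(Λ X₀) W‖ ≤ ‖clm (Λ X₀)‖ * ‖W‖ := (clm (Λ X₀)).le_opNorm W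
        _ ≤ ‖clm (Λ X₀)‖ * 1 :=
            mul_le_mul_of_nonneg_left (le_of_lt (mem_ball_zero_iff.mp hW)) (norm_nonneg _)
        _ = ‖clm (Λ X₀)‖ := mul_one _
    exact lt_of_le_of_lt (measure_mono hsub) (isCompact_closedBall X₀ _).measure_lt_top
  have hμtfin : ∀ s : Set (Euc n), s ⊆ Metric.ball Y₀ 1 → μt s ≠ ⊤ :=
    fun s hs => (lt_of_le_of_lt (measure_mono hs) hfin1).ne
  -- density bounds for open balls
  have hball : ∀ s : ℝ, 0 < s → s ≤ 1 →
      (1 - C * s ^ α) * (ω * s ^ n) ≤ (μt (Metric.ball Y₀ s)).toReal ∧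
      (μt (Metric.ball Y₀ s)).toReal ≤ (1 + C * s ^ α) * (ω * s ^ n) := by
    intro s hs hs1
    have hd : (0:ℝ) < ω * s ^ n := by positivity
    have hx : |(μt (Metric.ball Y₀ s)).toReal / (ω * s ^ n) - 1| ≤ C * s ^ α := by
      rw [hmapball s]
      exact hbound X₀ hX₀ s hs hs1
    set x := (μt (Metric.ball Y₀ s)).toReal with hxdef
    have h1 := (abs_le.mp hx).1
    have h2 := (abs_le.mp hx).2
    have hl : 1 - C * s ^ α ≤ x / (ω * s ^ n) := by linarith
    have hu : x / (ω * s ^ n) ≤ 1 + C * s ^ α := by linarith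
    constructor
    · have := mul_le_mul_of_nonneg_right hl hd.le
      rwa [div_mul_cancel₀ x hd.ne'] at this
    · have := mul_le_mul_of_nonneg_right hu hd.le
      rwa [div_mul_cancel₀ x hd.ne'] at this
  -- density bounds for closed balls
  have hcb_lo : ∀ s : ℝ, 0 < s → s < 1 →
      (1 - C * s ^ α) * (ω * s ^ n) ≤ (μt (Metric.closedBall Y₀ s)).toReal := by
    intro s hs hs1
    refine le_trans (hball s hs hs1.le).1 ?_
    exact ENNReal.toReal_mono (hμtfin _ (Metric.closedBall_subset_ball hs1))
      (measure_mono Metric.ball_subset_closedBall)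
  have hcb_up : ∀ s : ℝ, 0 < s → s < 1 →
      (μt (Metric.closedBall Y₀ s)).toReal ≤ (1 + C * s ^ α) * (ω * s ^ n) := by
    intro s hs hs1
    have key : ∀ s' : ℝ, s' ∈ Set.Ioo s 1 →
        (μt (Metric.closedBall Y₀ s)).toReal ≤ (1 + C * s' ^ α) * (ω * s' ^ n) := by
      intro s' hs'
      refine le_trans ?_ (hball s' (hs.trans hs'.1) hs'.2.le).2
      exact ENNReal.toReal_mono (hμtfin _ (Metric.ball_subset_ball hs'.2.le))
        (measure_mono (Metric.closedBall_subset_ball hs'.1))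
    have hcont : ContinuousAt (fun s' : ℝ => (1 + C * s' ^ α) * (ω * s' ^ n)) s := by
      have h1 : ContinuousAt (fun s' : ℝ => s' ^ α) s :=
        Real.continuousAt_rpow_const s α (Or.inl hs.ne')
      exact (continuousAt_const.add (continuousAt_const.mul h1)).mul
        (continuousAt_const.mul (continuous_pow n).continuousAt)
    refine ge_of_tendsto (hcont.continuousWithinAt : ContinuousWithinAt _ (Set.Ioi s) s) ?_
    filter_upwards [Ioo_mem_nhdsGT_of_mem ⟨le_refl s, hs1⟩] with s' hs' using key s' hs'
  -- the constant and radius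
  refine ⟨((n:ℝ) + 4) * C, by positivity, 1/2, by norm_num, ?_⟩
  intro r hr hr2
  have hr1 : r < 1 := lt_of_le_of_lt hr2 (by norm_num)
  set b := r ^ 2 with hbdef
  have hb0 : 0 < b := by positivity
  have hb1 : b < 1 := by nlinarith only [hr, hr2, hbdef]
  haveI hνfin : IsFiniteMeasure (μt.restrict (Metric.ball Y₀ r)) := by
    constructor
    rw [Measure.restrict_apply_univ]
    exact lt_of_le_of_lt (measure_mono (Metric.ball_subset_ball hr1.le)) hfin1
  have hfc : Continuous (fun Z : Euc n => ‖Z - Y₀‖ ^ 2) :=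
    (continuous_id.sub continuous_const).norm.pow 2
  have hfm' : ∀ t : ℝ, MeasurableSet {a : Euc n | t < ‖a - Y₀‖ ^ 2} :=
    fun t => measurableSet_lt measurable_const hfc.measurable
  have hint : Integrable (fun Z : Euc n => ‖Z - Y₀‖ ^ 2) (μt.restrict (Metric.ball Y₀ r)) := by
    refine Integrable.mono' (integrable_const (r ^ 2)) hfc.aestronglyMeasurable ?_
    filter_upwards [ae_restrict_mem measurableSet_ball] with Z hZ
    rw [Real.norm_eq_abs, abs_of_nonneg (by positivity)]
    have h1 : ‖Z - Y₀‖ < r := by rw [← dist_eq_norm]; exact Metric.mem_ball.mp hZ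
    nlinarith only [h1, norm_nonneg (Z - Y₀), hr]
  have hlayer : (∫ Z in Metric.ball Y₀ r, ‖Z - Y₀‖ ^ 2 ∂μt) = ∫ t in Set.Ioi (0:ℝ),
      ((μt.restrict (Metric.ball Y₀ r)) {a : Euc n | t < ‖a - Y₀‖ ^ 2}).toReal :=
    hint.integral_eq_integral_meas_lt (Eventually.of_forall fun z => by positivity)
  set h : ℝ → ℝ :=
    fun t => ((μt.restrict (Metric.ball Y₀ r)) {a : Euc n | t < ‖a - Y₀‖ ^ 2}).toReal with hhdef
  -- h vanishes beyond b
  have hzero : ∀ t : ℝ, b ≤ t → h t = 0 := by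
    intro t hbt
    rw [hhdef]
    simp only
    rw [Measure.restrict_apply (hfm' t)]
    have hempty : {a : Euc n | t < ‖a - Y₀‖ ^ 2} ∩ Metric.ball Y₀ r = ∅ := by
      ext Z
      simp only [Set.mem_inter_iff, Set.mem_setOf_eq, Metric.mem_ball, dist_eq_norm,
        Set.mem_empty_iff_false, iff_false, not_and]
      intro h1 h2
      nlinarith only [h1, h2, hbt, hbdef, norm_nonneg (Z - Y₀)]
    rw [hempty, measure_empty, ENNReal.toReal_zero]
  set M := (μt (Metric.ball Y₀ r)).toReal with hMdef
  -- formula for h on (0, b)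
  have hform : ∀ t ∈ Set.Ioo (0:ℝ) b, h t =
      M - (μt (Metric.closedBall Y₀ (Real.sqrt t))).toReal := by
    intro t ht
    have hst : Real.sqrt t < r := (Real.sqrt_lt' hr).mpr ht.2
    have hseteq : {a : Euc n | t < ‖a - Y₀‖ ^ 2} ∩ Metric.ball Y₀ r =
        Metric.ball Y₀ r \ Metric.closedBall Y₀ (Real.sqrt t) := by
      ext Z
      simp only [Set.mem_inter_iff, Set.mem_setOf_eq, Metric.mem_ball, Metric.mem_closedBall,
        Set.mem_diff, dist_eq_norm]
      constructor
      · rintro ⟨h1, h2⟩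
        refine ⟨h2, fun hle => ?_⟩
        linarith only [h1, Real.sq_sqrt ht.1.le,
          mul_le_mul hle hle (norm_nonneg (Z - Y₀)) (Real.sqrt_nonneg t)]
      · rintro ⟨h2, h1⟩
        push_neg at h1
        refine ⟨?_, h2⟩
        nlinarith only [Real.sq_sqrt ht.1.le,
          mul_self_lt_mul_self (Real.sqrt_nonneg t) h1]

    rw [hhdef]
    simp only
    rw [Measure.restrict_apply (hfm' t), hseteq,
      measure_diff (Metric.closedBall_subset_ball hst)
        measurableSet_closedBall.nullMeasurableSet
        (hμtfin _ ((Metric.closedBall_subset_ball hst).trans (Metric.ball_subset_ball hr1.le))),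
      ENNReal.toReal_sub_of_le (measure_mono (Metric.closedBall_subset_ball hst))
        (hμtfin _ (Metric.ball_subset_ball hr1.le))]
  -- restrict the integral to (0, b)
  have hIoi : (∫ t in Set.Ioi (0:ℝ), h t) = ∫ t in Set.Ioo (0:ℝ) b, h t := by
    have hsub : Set.Ioi (0:ℝ) ∩ Set.Ioo 0 b = Set.Ioo 0 b :=
      Set.inter_eq_self_of_subset_right (fun x hx => hx.1)
    rw [← hsub, ← MeasureTheory.setIntegral_indicator measurableSet_Ioo]
    apply MeasureTheory.setIntegral_congr_fun measurableSet_Ioi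
    intro t ht
    by_cases hc : t ∈ Set.Ioo (0:ℝ) b
    · rw [Set.indicator_of_mem hc]
    · rw [Set.indicator_of_notMem hc]
      rcases le_or_gt b t with hh | hh
      · exact hzero t hh
      · exact absurd ⟨ht, hh⟩ hc
  -- integrability of h
  have hanti : Antitone h := by
    intro t1 t2 h12
    exact ENNReal.toReal_mono (measure_ne_top _ _)
      (measure_mono (fun a ha => lt_of_le_of_lt h12 ha))
  have hhint : IntegrableOn h (Set.Ioo (0:ℝ) b) := by
    apply Measure.integrableOn_of_bounded (M := ((μt.restrict (Metric.ball Y₀ r)) Set.univ).toReal)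
    · rw [Real.volume_Ioo]; exact ENNReal.ofReal_ne_top
    · exact hanti.measurable.aestronglyMeasurable
    · refine Eventually.of_forall fun t => ?_
      rw [Real.norm_eq_abs, abs_of_nonneg ENNReal.toReal_nonneg]
      exact ENNReal.toReal_mono (measure_ne_top _ _) (measure_mono (Set.subset_univ _))
  -- comparison functions
  have hn2 : (-1:ℝ) < (n:ℝ)/2 := lt_of_lt_of_le neg_one_lt_zero (by positivity)
  have han2 : (-1:ℝ) < (α + (n:ℝ))/2 := lt_of_lt_of_le neg_one_lt_zero (by positivity)
  have hip : IntervalIntegrable (fun t : ℝ => t ^ ((n:ℝ)/2)) volume 0 b :=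
    intervalIntegral.intervalIntegrable_rpow' hn2
  have hiq : IntervalIntegrable (fun t : ℝ => t ^ ((α + (n:ℝ))/2)) volume 0 b :=
    intervalIntegral.intervalIntegrable_rpow' han2
  have hφp_ii : IntervalIntegrable
      (fun t : ℝ => M - ω * t ^ ((n:ℝ)/2) + C * ω * t ^ ((α + (n:ℝ))/2)) volume 0 b :=
    (intervalIntegrable_const.sub (hip.const_mul ω)).add (hiq.const_mul (C * ω))
  have hφm_ii : IntervalIntegrable
      (fun t : ℝ => M - ω * t ^ ((n:ℝ)/2) - C * ω * t ^ ((α + (n:ℝ))/2)) volume 0 b :=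
    (intervalIntegrable_const.sub (hip.const_mul ω)).sub (hiq.const_mul (C * ω))
  have hφp_int : IntegrableOn
      (fun t : ℝ => M - ω * t ^ ((n:ℝ)/2) + C * ω * t ^ ((α + (n:ℝ))/2)) (Set.Ioo (0:ℝ) b) :=
    hφp_ii.1.mono_set Set.Ioo_subset_Ioc_self
  have hφm_int : IntegrableOn
      (fun t : ℝ => M - ω * t ^ ((n:ℝ)/2) - C * ω * t ^ ((α + (n:ℝ))/2)) (Set.Ioo (0:ℝ) b) :=
    hφm_ii.1.mono_set Set.Ioo_subset_Ioc_self
  -- pointwise bounds for h on (0, b)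
  have hMlo := (hball r hr hr1.le).1
  have hMup := (hball r hr hr1.le).2
  have hptwise : ∀ t ∈ Set.Ioo (0:ℝ) b,
      (M - ω * t ^ ((n:ℝ)/2) - C * ω * t ^ ((α + (n:ℝ))/2) ≤ h t ∧
       h t ≤ M - ω * t ^ ((n:ℝ)/2) + C * ω * t ^ ((α + (n:ℝ))/2)) := by
    intro t ht
    have hs0 : 0 < Real.sqrt t := Real.sqrt_pos.mpr ht.1
    have hs1 : Real.sqrt t < 1 := (Real.sqrt_lt' one_pos).mpr (by nlinarith only [ht.2, hb1])
    have e1 : Real.sqrt t ^ n = t ^ ((n:ℝ)/2) := by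
      rw [← Real.rpow_natCast (Real.sqrt t) n, Real.sqrt_eq_rpow, ← Real.rpow_mul ht.1.le]
      congr 1; ring
    have e2 : Real.sqrt t ^ α = t ^ (α/2) := by
      rw [Real.sqrt_eq_rpow, ← Real.rpow_mul ht.1.le]
      congr 1; ring
    have e3 : t ^ (α/2) * t ^ ((n:ℝ)/2) = t ^ ((α + (n:ℝ))/2) := by
      rw [← Real.rpow_add ht.1]; congr 1; ring
    have hDlo := hcb_lo (Real.sqrt t) hs0 hs1
    have hDup := hcb_up (Real.sqrt t) hs0 hs1
    rw [e1, e2] at hDlo hDup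
    have hexp1 : (1 - C * t ^ (α/2)) * (ω * t ^ ((n:ℝ)/2)) =
        ω * t ^ ((n:ℝ)/2) - C * ω * t ^ ((α + (n:ℝ))/2) := by rw [← e3]; ring
    have hexp2 : (1 + C * t ^ (α/2)) * (ω * t ^ ((n:ℝ)/2)) =
        ω * t ^ ((n:ℝ)/2) + C * ω * t ^ ((α + (n:ℝ))/2) := by rw [← e3]; ring
    rw [hexp1] at hDlo
    rw [hexp2] at hDup
    rw [hform t ht]
    constructor
    · linarith
    · linarith
  -- integral comparisons
  have hIle : (∫ t in Set.Ioo (0:ℝ) b, h t) ≤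
      ∫ t in Set.Ioo (0:ℝ) b, (M - ω * t ^ ((n:ℝ)/2) + C * ω * t ^ ((α + (n:ℝ))/2)) :=
    setIntegral_mono_on hhint hφp_int measurableSet_Ioo (fun t ht => (hptwise t ht).2)
  have hIge : (∫ t in Set.Ioo (0:ℝ) b, (M - ω * t ^ ((n:ℝ)/2) - C * ω * t ^ ((α + (n:ℝ))/2))) ≤
      ∫ t in Set.Ioo (0:ℝ) b, h t :=
    setIntegral_mono_on hφm_int hhint measurableSet_Ioo (fun t ht => (hptwise t ht).1)
  -- exact values of the comparison integrals
  have hz1 : (0:ℝ) ^ ((n:ℝ)/2 + 1) = 0 := Real.zero_rpow (by positivity)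
  have hz2 : (0:ℝ) ^ ((α + (n:ℝ))/2 + 1) = 0 := Real.zero_rpow (by positivity)
  have hrpow1 : (∫ t in (0:ℝ)..b, t ^ ((n:ℝ)/2)) = b ^ ((n:ℝ)/2 + 1) / ((n:ℝ)/2 + 1) := by
    rw [integral_rpow (Or.inl hn2), hz1, sub_zero]
  have hrpow2 : (∫ t in (0:ℝ)..b, t ^ ((α + (n:ℝ))/2)) =
      b ^ ((α + (n:ℝ))/2 + 1) / ((α + (n:ℝ))/2 + 1) := by
    rw [integral_rpow (Or.inl han2), hz2, sub_zero]
  have hIp : (∫ t in Set.Ioo (0:ℝ) b, (M - ω * t ^ ((n:ℝ)/2) + C * ω * t ^ ((α + (n:ℝ))/2))) =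
      M * b - ω * (b ^ ((n:ℝ)/2 + 1) / ((n:ℝ)/2 + 1))
        + C * ω * (b ^ ((α + (n:ℝ))/2 + 1) / ((α + (n:ℝ))/2 + 1)) := by
    rw [← MeasureTheory.integral_Ioc_eq_integral_Ioo, ← intervalIntegral.integral_of_le hb0.le,
      intervalIntegral.integral_add (intervalIntegrable_const.sub (hip.const_mul ω))
        (hiq.const_mul (C * ω)),
      intervalIntegral.integral_sub intervalIntegrable_const (hip.const_mul ω),
      intervalIntegral.integral_const, intervalIntegral.integral_const_mul,
      intervalIntegral.integral_const_mul, hrpow1, hrpow2]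
    simp only [smul_eq_mul, sub_zero]
    ring
  have hIm : (∫ t in Set.Ioo (0:ℝ) b, (M - ω * t ^ ((n:ℝ)/2) - C * ω * t ^ ((α + (n:ℝ))/2))) =
      M * b - ω * (b ^ ((n:ℝ)/2 + 1) / ((n:ℝ)/2 + 1))
        - C * ω * (b ^ ((α + (n:ℝ))/2 + 1) / ((α + (n:ℝ))/2 + 1)) := by
    rw [← MeasureTheory.integral_Ioc_eq_integral_Ioo, ← intervalIntegral.integral_of_le hb0.le,
      intervalIntegral.integral_sub (intervalIntegrable_const.sub (hip.const_mul ω))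
        (hiq.const_mul (C * ω)),
      intervalIntegral.integral_sub intervalIntegrable_const (hip.const_mul ω),
      intervalIntegral.integral_const, intervalIntegral.integral_const_mul,
      intervalIntegral.integral_const_mul, hrpow1, hrpow2]
    simp only [smul_eq_mul, sub_zero]
    ring
  -- power conversions
  set P := r ^ (n + 2) with hPdef
  set Q := r ^ α with hQdef
  have hP0 : 0 < P := pow_pos hr _
  have hQ0 : 0 < Q := Real.rpow_pos_of_pos hr α
  have hb2 : b = r ^ (2:ℝ) := by
    rw [hbdef, ← Real.rpow_natCast r 2]; norm_num
  have eb1 : b ^ ((n:ℝ)/2 + 1) = P := by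
    rw [hb2, ← Real.rpow_mul hr.le, hPdef, ← Real.rpow_natCast r (n + 2)]
    congr 1
    push_cast
    ring
  have eb2 : b ^ ((α + (n:ℝ))/2 + 1) = Q * P := by
    rw [hb2, ← Real.rpow_mul hr.le, hQdef, hPdef, ← Real.rpow_natCast r (n + 2),
      ← Real.rpow_add hr]
    congr 1
    push_cast
    ring
  have hMb_up : M * b ≤ (1 + C * Q) * (ω * P) := by
    calc M * b ≤ ((1 + C * Q) * (ω * r ^ n)) * b := mul_le_mul_of_nonneg_right hMup hb0.le
      _ = (1 + C * Q) * (ω * P) := by rw [hPdef, pow_add, hbdef]; ring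
  have hMb_lo : (1 - C * Q) * (ω * P) ≤ M * b := by
    calc (1 - C * Q) * (ω * P) = ((1 - C * Q) * (ω * r ^ n)) * b := by
          rw [hPdef, pow_add, hbdef]; ring
      _ ≤ M * b := mul_le_mul_of_nonneg_right hMlo hb0.le
  have hden1 : (0:ℝ) < (n:ℝ)/2 + 1 := by positivity
  have hden2 : (0:ℝ) < (α + (n:ℝ))/2 + 1 := by positivity
  have t1 : ((n:ℝ) + 2) * (ω * (b ^ ((n:ℝ)/2 + 1) / ((n:ℝ)/2 + 1))) = 2 * (ω * P) := by
    rw [eb1]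
    field_simp
  have t2 : ((n:ℝ) + 2) * (C * ω * (b ^ ((α + (n:ℝ))/2 + 1) / ((α + (n:ℝ))/2 + 1))) ≤
      2 * (C * ω * (Q * P)) := by
    rw [eb2]
    have hfrac : ((n:ℝ) + 2) / ((α + (n:ℝ))/2 + 1) ≤ 2 := by
      rw [div_le_iff₀ hden2]; linarith
    have hnn : (0:ℝ) ≤ C * ω * (Q * P) := by positivity
    calc ((n:ℝ) + 2) * (C * ω * (Q * P / ((α + (n:ℝ))/2 + 1)))
        = (((n:ℝ) + 2) / ((α + (n:ℝ))/2 + 1)) * (C * ω * (Q * P)) := by ring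
      _ ≤ 2 * (C * ω * (Q * P)) := mul_le_mul_of_nonneg_right hfrac hnn
  have t3 : ((n:ℝ) + 2) * (M * b) ≤ ((n:ℝ) + 2) * ((1 + C * Q) * (ω * P)) :=
    mul_le_mul_of_nonneg_left hMb_up (by positivity)
  have t3' : ((n:ℝ) + 2) * ((1 - C * Q) * (ω * P)) ≤ ((n:ℝ) + 2) * (M * b) :=
    mul_le_mul_of_nonneg_left hMb_lo (by positivity)
  have hIle' := hIle
  rw [hIp] at hIle'
  have hIge' := hIge
  rw [hIm] at hIge'
  have c1 : ((n:ℝ) + 2) * (∫ t in Set.Ioo (0:ℝ) b, h t) ≤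
      ((n:ℝ) + 2) * (M * b - ω * (b ^ ((n:ℝ)/2 + 1) / ((n:ℝ)/2 + 1))
        + C * ω * (b ^ ((α + (n:ℝ))/2 + 1) / ((α + (n:ℝ))/2 + 1))) :=
    mul_le_mul_of_nonneg_left hIle' (by positivity)
  have c2 : ((n:ℝ) + 2) * (M * b - ω * (b ^ ((n:ℝ)/2 + 1) / ((n:ℝ)/2 + 1))
        - C * ω * (b ^ ((α + (n:ℝ))/2 + 1) / ((α + (n:ℝ))/2 + 1))) ≤
      ((n:ℝ) + 2) * (∫ t in Set.Ioo (0:ℝ) b, h t) :=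
    mul_le_mul_of_nonneg_left hIge' (by positivity)
  have key_up : ((n:ℝ) + 2) * (∫ t in Set.Ioo (0:ℝ) b, h t) ≤
      (n:ℝ) * (ω * P) + ((n:ℝ) + 4) * C * Q * (ω * P) := by
    linarith only [c1, t1, t2, t3]
  have key_lo : (n:ℝ) * (ω * P) - ((n:ℝ) + 4) * C * Q * (ω * P) ≤
      ((n:ℝ) + 2) * (∫ t in Set.Ioo (0:ℝ) b, h t) := by
    linarith only [c2, t1, t2, t3']
  rw [hlayer, hIoi, abs_le]
  have hωP : (0:ℝ) < ω * P := by positivity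
  constructor
  · rw [div_mul_eq_mul_div, le_sub_iff_add_le, le_div_iff₀ hωP]
    linarith only [key_lo]
  · rw [div_mul_eq_mul_div, sub_le_iff_le_add, div_le_iff₀ hωP]
    linarith only [key_up]
end

section
/- Suppose Λ takes values in symmetric positive definite matrices and is locally Hölder continuous with exponent β ∈ (0,1), and suppose there exists α ∈ (0,1) such that for every compact K ⊂ ℝ^{n+1} there is C_K > 0 with |μ(B_Λ(X,tr))/μ(B_Λ(X,r)) − t^n| ≤ C_K·r^α for all X ∈ Σ ∩ K, t ∈ [1/2,1] and r ∈ (0,1]. Then for every X ∈ Σ the limit Θ_Λ(μ,X) = lim_{r→0} μ(B_Λ(X,r))/(ω_n r^n) exists and satisfies 0 < Θ_Λ(μ,X) < ∞. -/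
open MeasureTheory Metric Filter
open scoped RealInnerProductSpace ENNReal Topology

section Aux

open Real Set

private lemma abs_log_le_two_mul (u : ℝ) (hu : 0 < u) (h : |u - 1| ≤ 1/2) :
    |Real.log u| ≤ 2 * |u - 1| := by
  rcases le_or_gt 1 u with h1 | h1
  · rw [abs_of_nonneg (Real.log_nonneg h1), abs_of_nonneg (by linarith)]
    have := Real.log_le_sub_one_of_pos hu
    linarith
  · have hu2 : 1/2 ≤ u := by
      rcases abs_le.mp h with ⟨h2, _⟩; linarith
    rw [abs_of_nonpos (Real.log_nonpos hu.le h1.le), abs_of_nonpos (by linarith)]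
    have hinv : Real.log u⁻¹ ≤ u⁻¹ - 1 := Real.log_le_sub_one_of_pos (by positivity)
    rw [Real.log_inv] at hinv
    have huu : u * u⁻¹ = 1 := mul_inv_cancel₀ hu.ne'
    nlinarith [huu, hu2, h1.le]

private lemma aux_cauchy (α : ℝ) (hα : 0 < α) (D r₀ : ℝ) (hD : 0 < D) (hr₀ : 0 < r₀)
    (g : ℝ → ℝ)
    (hstep : ∀ t ∈ Set.Icc (1/2 : ℝ) 1, ∀ r : ℝ, 0 < r → r ≤ r₀ →
      |g (t * r) - g r| ≤ 2 * D * r ^ α) :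
    ∃ ℓ : ℝ, Filter.Tendsto g (nhdsWithin 0 (Set.Ioi (0:ℝ))) (nhds ℓ) := by
  set c : ℝ := (2:ℝ)⁻¹ ^ α with hc_def
  have hc0 : 0 < c := Real.rpow_pos_of_pos (by norm_num) α
  have hc1 : c < 1 := Real.rpow_lt_one (by norm_num) (by norm_num) hα
  set E : ℝ := 2 * D / (1 - c) with hE_def
  have hE0 : 0 < E := by
    apply div_pos (by linarith) (by linarith)
  have hEid : E * (1 - c) = 2 * D := div_mul_cancel₀ _ (by linarith)
  have hE2D : 2 * D ≤ E := by nlinarith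
  -- key induction
  have key : ∀ k : ℕ, ∀ r : ℝ, 0 < r → r ≤ r₀ → ∀ s : ℝ,
      r * (2:ℝ)⁻¹ ^ k ≤ s → s ≤ r → |g s - g r| ≤ E * r ^ α := by
    intro k
    induction k with
    | zero =>
      intro r hr hrr₀ s hs1 hs2
      rw [pow_zero, mul_one] at hs1
      have : s = r := le_antisymm hs2 hs1
      rw [this, sub_self, abs_zero]
      positivity
    | succ k ih =>
      intro r hr hrr₀ s hs1 hs2
      by_cases hs3 : r / 2 ≤ s
      · -- one step
        have ht : s / r ∈ Set.Icc (1/2 : ℝ) 1 := by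
          constructor
          · rw [le_div_iff₀ hr]; linarith
          · rw [div_le_one hr]; exact hs2
        have := hstep (s / r) ht r hr hrr₀
        rw [div_mul_cancel₀ _ hr.ne'] at this
        calc |g s - g r| ≤ 2 * D * r ^ α := this
          _ ≤ E * r ^ α := by
              apply mul_le_mul_of_nonneg_right hE2D (Real.rpow_nonneg hr.le α)
      · push_neg at hs3
        have h1 : |g s - g (r / 2)| ≤ E * (r / 2) ^ α := by
          apply ih (r / 2) (by linarith) (by linarith) s _ hs3.le
          calc r / 2 * (2:ℝ)⁻¹ ^ k = r * (2:ℝ)⁻¹ ^ (k + 1) := by ring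
            _ ≤ s := hs1
        have h2 : |g (r / 2) - g r| ≤ 2 * D * r ^ α := by
          have := hstep (1/2) (by norm_num) r hr hrr₀
          have heq : (1:ℝ)/2 * r = r / 2 := by ring
          rwa [heq] at this
        have h3 : (r / 2 : ℝ) ^ α = r ^ α * c := by
          rw [hc_def, div_eq_mul_inv, Real.mul_rpow hr.le (by norm_num)]
        calc |g s - g r| ≤ |g s - g (r/2)| + |g (r/2) - g r| := abs_sub_le _ _ _
          _ ≤ E * (r / 2) ^ α + 2 * D * r ^ α := add_le_add h1 h2
          _ = (E * c + 2 * D) * r ^ α := by rw [h3]; ring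
          _ = E * r ^ α := by nlinarith [Real.rpow_nonneg hr.le α]
  have key2 : ∀ s r : ℝ, 0 < s → s ≤ r → r ≤ r₀ → |g s - g r| ≤ E * r ^ α := by
    intro s r hs hsr hrr₀
    have hr : 0 < r := lt_of_lt_of_le hs hsr
    obtain ⟨k, hk⟩ := exists_pow_lt_of_lt_one (div_pos hs hr) (show (2:ℝ)⁻¹ < 1 by norm_num)
    apply key k r hr hrr₀ s _ hsr
    have := (lt_div_iff₀ hr).mp hk
    linarith [this]
  have hcauchy : Cauchy (Filter.map g (nhdsWithin 0 (Set.Ioi (0:ℝ)))) := by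
    rw [Metric.cauchy_iff]
    refine ⟨Filter.map_neBot, ?_⟩
    intro ε hε
    -- choose δ
    set δ : ℝ := min r₀ ((ε / (E + 1)) ^ α⁻¹) with hδ_def
    have hεE : 0 < ε / (E + 1) := by positivity
    have hδ0 : 0 < δ := lt_min hr₀ (Real.rpow_pos_of_pos hεE _)
    have hδr₀ : δ ≤ r₀ := min_le_left _ _
    have hδα : E * δ ^ α < ε := by
      have h1 : δ ^ α ≤ ε / (E + 1) := by
        calc δ ^ α ≤ ((ε / (E + 1)) ^ α⁻¹) ^ α :=
              Real.rpow_le_rpow hδ0.le (min_le_right _ _) hα.le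
          _ = ε / (E + 1) := Real.rpow_inv_rpow hεE.le hα.ne'
      calc E * δ ^ α ≤ E * (ε / (E + 1)) :=
            mul_le_mul_of_nonneg_left h1 hE0.le
        _ < ε := by
            rw [mul_div_assoc'] at *
            rw [div_lt_iff₀ (by linarith)]
            nlinarith
    refine ⟨g '' Set.Ioc 0 δ, Filter.image_mem_map (Ioc_mem_nhdsGT hδ0), ?_⟩
    rintro _ ⟨x, hx, rfl⟩ _ ⟨y, hy, rfl⟩
    rw [Real.dist_eq]
    rcases le_total x y with hxy | hxy
    · calc |g x - g y| ≤ E * y ^ α := key2 x y hx.1 hxy (hy.2.trans hδr₀)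
        _ ≤ E * δ ^ α := mul_le_mul_of_nonneg_left
            (Real.rpow_le_rpow (hx.1.trans_le hxy).le hy.2 hα.le) hE0.le
        _ < ε := hδα
    · rw [abs_sub_comm]
      calc |g y - g x| ≤ E * x ^ α := key2 y x hy.1 hxy (hx.2.trans hδr₀)
        _ ≤ E * δ ^ α := mul_le_mul_of_nonneg_left
            (Real.rpow_le_rpow (hy.1.trans_le hxy).le hx.2 hα.le) hE0.le
        _ < ε := hδα
  obtain ⟨ℓ, hℓ⟩ := CompleteSpace.complete hcauchy
  exact ⟨ℓ, hℓ⟩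

end Aux

/-- Existence, positivity and finiteness of the anisotropic density
under Hölder asymptotically optimal doubling. -/
theorem density_exists_pos_finite (n : ℕ) (α β : ℝ)
    (hα : α ∈ Set.Ioo (0 : ℝ) 1) (hβ : β ∈ Set.Ioo (0 : ℝ) 1)
    (Λ : Euc n → (Euc n ≃L[ℝ] Euc n))
    (hPD : ∀ X : Euc n, IsSymPD (clm (Λ X)))
    (hHol : HolderOnCompacts Λ β)
    (μ : Measure (Euc n)) [IsLocallyFiniteMeasure μ]
    (hdbl : DoublingHolder Λ μ α) :
    ∀ X ∈ msupport μ, ∃ L : ℝ, 0 < L ∧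
      Tendsto (fun r : ℝ => (μ (BLam Λ X r)).toReal / (omegaN n * r ^ n))
        (nhdsWithin 0 (Set.Ioi (0 : ℝ))) (nhds L) := by
  intro X hX
  have hω : 0 < omegaN n := by
    unfold omegaN
    apply ENNReal.toReal_pos
    · exact (measure_ball_pos volume _ one_pos).ne'
    · exact measure_ball_lt_top.ne
  have hfin : ∀ r : ℝ, μ (BLam Λ X r) ≠ ⊤ := by
    intro r
    have hsub : BLam Λ X r ⊆ Metric.closedBall X (‖clm (Λ X)‖ * |r|) := by
      rintro _ ⟨W, hW, rfl⟩
      rw [Metric.mem_closedBall, dist_eq_norm, add_sub_cancel_left]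
      calc ‖(Λ X) W‖ ≤ ‖clm (Λ X)‖ * ‖W‖ := (clm (Λ X)).le_opNorm W
        _ ≤ ‖clm (Λ X)‖ * |r| := by
            apply mul_le_mul_of_nonneg_left _ (norm_nonneg _)
            exact ((mem_ball_zero_iff.mp hW).le).trans (le_abs_self r)
    exact ((measure_mono hsub).trans_lt
      (isCompact_closedBall X _).measure_lt_top).ne
  have hpos : ∀ r : ℝ, 0 < r → μ (BLam Λ X r) ≠ 0 := by
    intro r hr
    have hopen : IsOpen (BLam Λ X r) := by
      have h1 : IsOpenMap fun W : Euc n => X + (Λ X) W := by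
        have := (Homeomorph.addLeft X).isOpenMap.comp (Λ X).toHomeomorph.isOpenMap
        exact this
      exact h1 _ Metric.isOpen_ball
    have hXmem : X ∈ BLam Λ X r := ⟨0, Metric.mem_ball_self hr, by simp⟩
    obtain ⟨δ, hδ0, hδ⟩ := Metric.isOpen_iff.mp hopen X hXmem
    exact (lt_of_lt_of_le (hX δ hδ0) (measure_mono hδ)).ne'
  set F : ℝ → ℝ := fun r => (μ (BLam Λ X r)).toReal / (omegaN n * r ^ n) with hF_def
  have hF : ∀ r : ℝ, 0 < r → 0 < F r := fun r hr =>
    div_pos (ENNReal.toReal_pos (hpos r hr) (hfin r)) (mul_pos hω (pow_pos hr n))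
  obtain ⟨C, hC0, hCb⟩ := hdbl {X} isCompact_singleton
  have hCX := hCb X ⟨hX, rfl⟩
  set D : ℝ := C * 2 ^ n with hD_def
  have hD : 0 < D := mul_pos hC0 (by positivity)
  set r₀ : ℝ := min 1 ((1 / (2 * D)) ^ α⁻¹) with hr₀_def
  have hr₀0 : 0 < r₀ := lt_min one_pos (Real.rpow_pos_of_pos (by positivity) _)
  have hr₀1 : r₀ ≤ 1 := min_le_left _ _
  have hsmall : ∀ r : ℝ, 0 < r → r ≤ r₀ → D * r ^ α ≤ 1 / 2 := by
    intro r hr hrr₀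
    have h1 : r ^ α ≤ 1 / (2 * D) := by
      calc r ^ α ≤ ((1 / (2 * D)) ^ α⁻¹) ^ α :=
            Real.rpow_le_rpow hr.le (hrr₀.trans (min_le_right _ _)) hα.1.le
        _ = 1 / (2 * D) := Real.rpow_inv_rpow (by positivity) hα.1.ne'
    calc D * r ^ α ≤ D * (1 / (2 * D)) := mul_le_mul_of_nonneg_left h1 hD.le
      _ = 1 / 2 := by field_simp
  set g : ℝ → ℝ := fun r => Real.log (F r) with hg_def
  have hstep : ∀ t ∈ Set.Icc (1/2 : ℝ) 1, ∀ r : ℝ, 0 < r → r ≤ r₀ →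
      |g (t * r) - g r| ≤ 2 * D * r ^ α := by
    intro t ht r hr hrr₀
    obtain ⟨ht1, ht2⟩ := ht
    have ht0 : 0 < t := by linarith
    have htr : 0 < t * r := mul_pos ht0 hr
    set a : ℝ := (μ (BLam Λ X (t * r))).toReal with ha_def
    set b : ℝ := (μ (BLam Λ X r)).toReal with hb_def
    have ha : 0 < a := ENNReal.toReal_pos (hpos _ htr) (hfin _)
    have hb : 0 < b := ENNReal.toReal_pos (hpos _ hr) (hfin _)
    have hCr : |a / b - t ^ n| ≤ C * r ^ α :=
      hCX t ⟨ht1, ht2⟩ r hr (hrr₀.trans hr₀1)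
    have htn : 0 < t ^ n := pow_pos ht0 n
    have hu : F (t * r) / F r = (a / b) / t ^ n := by
      show (a / (omegaN n * (t * r) ^ n)) / (b / (omegaN n * r ^ n)) = a / b / t ^ n
      rw [mul_pow]
      field_simp
    have hupos : 0 < F (t * r) / F r := div_pos (hF _ htr) (hF _ hr)
    have hu1 : |F (t * r) / F r - 1| ≤ D * r ^ α := by
      rw [hu]
      have h2 : a / b / t ^ n - 1 = (a / b - t ^ n) / t ^ n := by field_simp
      rw [h2, abs_div, abs_of_pos htn, div_le_iff₀ htn]
      have h3 : (1 : ℝ) ≤ 2 ^ n * t ^ n := by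
        rw [← mul_pow]; exact one_le_pow₀ (by linarith)
      have hra : 0 ≤ C * r ^ α := mul_nonneg hC0.le (Real.rpow_nonneg hr.le α)
      calc |a / b - t ^ n| ≤ C * r ^ α := hCr
        _ = C * r ^ α * 1 := (mul_one _).symm
        _ ≤ C * r ^ α * (2 ^ n * t ^ n) := mul_le_mul_of_nonneg_left h3 hra
        _ = D * r ^ α * t ^ n := by rw [hD_def]; ring
    have hlog : g (t * r) - g r = Real.log (F (t * r) / F r) := by
      rw [hg_def]
      exact (Real.log_div (hF _ htr).ne' (hF _ hr).ne').symm
    calc |g (t * r) - g r| = |Real.log (F (t * r) / F r)| := by rw [hlog]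
      _ ≤ 2 * |F (t * r) / F r - 1| :=
          abs_log_le_two_mul _ hupos (hu1.trans (hsmall r hr hrr₀))
      _ ≤ 2 * (D * r ^ α) := by linarith [hu1]
      _ = 2 * D * r ^ α := by ring
  obtain ⟨ℓ, hℓ⟩ := aux_cauchy α hα.1 D r₀ hD hr₀0 g hstep
  refine ⟨Real.exp ℓ, Real.exp_pos ℓ, ?_⟩
  have h1 : Tendsto (fun r => Real.exp (g r)) (nhdsWithin 0 (Set.Ioi (0:ℝ)))
      (nhds (Real.exp ℓ)) := (Real.continuous_exp.tendsto ℓ).comp hℓ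
  apply Filter.Tendsto.congr' _ h1
  filter_upwards [self_mem_nhdsWithin] with r hr
  exact Real.exp_log (hF r hr)
end
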